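/- arXiv:2604.13467 — 3 statements merged into one kernel-verified Lean document; each statement's English description precedes it below -/
import Mathlib

section
/- With Z_n as above, the almost-sure martingale limit Z = lim_n Z_n satisfies E_P(log Z) = h(P), where h(P) = lim_n H(P_n)/n is the entropy rate of P. -/
open MeasureTheory Filter Finset

noncomputable section

variable {A : Type*}

def shift (x : ℕ → A) : ℕ → A := fun n => x (n + 1)

def cyl (x : ℕ → A) (n : ℕ) : Set (ℕ → A) := {y | ∀ i < n, y i = x i}

variable [MeasurableSpace A]

def Zf (P : Measure (ℕ → A)) (n : ℕ) (x : ℕ → A) : ℝ :=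
  (P (cyl (shift x) (n - 1))).toReal / (P (cyl x n)).toReal

def suppP (P : Measure (ℕ → A)) : Set (ℕ → A) := {x | ∀ n, 0 < P (cyl x n)}

def cylW {n : ℕ} (w : Fin n → A) : Set (ℕ → A) := {y | ∀ i : Fin n, y i.val = w i}

def Hn [Fintype A] (P : Measure (ℕ → A)) (n : ℕ) : ℝ :=
  ∑ w : Fin n → A, Real.negMulLog ((P (cylW w)).toReal)

def coordFiltration (A : Type*) [MeasurableSpace A] :
    Filtration ℕ (MeasurableSpace.pi : MeasurableSpace (ℕ → A)) where
  seq n := MeasurableSpace.comap (fun x : ℕ → A => fun i : Fin (n + 1) => x i) MeasurableSpace.pi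
  mono' := by
    intro m n hmn
    have h : (fun x : ℕ → A => fun i : Fin (m + 1) => x i)
        = (fun v : Fin (n + 1) → A => fun i : Fin (m + 1) => v (Fin.castLE (by omega) i))
          ∘ (fun x : ℕ → A => fun i : Fin (n + 1) => x i) := rfl
    show MeasurableSpace.comap _ _ ≤ MeasurableSpace.comap _ _
    rw [h, ← MeasurableSpace.comap_comp]
    exact MeasurableSpace.comap_mono
      ((measurable_pi_lambda _ (fun i => measurable_pi_apply _)).comap_le)
  le' := by
    intro n
    exact (measurable_pi_lambda _ (fun i => measurable_pi_apply i.val)).comap_le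

set_option linter.unusedSectionVars false
namespace SMBaux
open scoped Classical
def rel (a b : A) : Prop := ∀ s : Set A, MeasurableSet s → a ∈ s → b ∈ s
lemma rel_refl (a : A) : rel a a := fun _ _ h => h
lemma rel_trans {a b c : A} (h1 : rel a b) (h2 : rel b c) : rel a c :=
  fun s hs ha => h2 s hs (h1 s hs ha)
lemma rel_symm {a b : A} (h : rel a b) : rel b a := by
  intro s hs hb; by_contra ha; exact h sᶜ hs.compl ha hb
def atomOf (a : A) : Set A := {b | rel a b}
variable [Fintype A]
lemma measurableSet_atomOf (a : A) : MeasurableSet (atomOf a) := by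
  have : atomOf a = ⋂₀ {s : Set A | MeasurableSet s ∧ a ∈ s} := by
    ext b
    constructor
    · intro hb s hs
      exact hb s hs.1 hs.2
    · intro hb s hs ha
      exact hb s ⟨hs, ha⟩
  rw [this]
  exact MeasurableSet.sInter (Set.to_countable _) (fun s hs => hs.1)

lemma rel_iff_of_rel {a b c : A} (h : rel a b) : rel a c ↔ rel b c :=
  ⟨fun h2 => rel_trans (rel_symm h) h2, fun h2 => rel_trans h h2⟩

def rep (a : A) : A :=
  (Fintype.equivFin A).symm
    (((Finset.univ.filter (fun b => rel a b)).image (Fintype.equivFin A)).min'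
      ⟨Fintype.equivFin A a, Finset.mem_image_of_mem _ (by simp [rel_refl])⟩)

lemma rel_rep (a : A) : rel a (rep a) := by
  have h := Finset.min'_mem ((Finset.univ.filter (fun b => rel a b)).image (Fintype.equivFin A))
      ⟨Fintype.equivFin A a, Finset.mem_image_of_mem _ (by simp [rel_refl])⟩
  rcases Finset.mem_image.1 h with ⟨b, hb, hbe⟩
  have : rep a = b := by
    rw [rep, ← hbe, Equiv.symm_apply_apply]
  rw [this]
  exact (Finset.mem_filter.1 hb).2

lemma rep_eq_of_rel {a b : A} (h : rel a b) : rep a = rep b := by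
  have : (Finset.univ.filter (fun c => rel a c)) = (Finset.univ.filter (fun c => rel b c)) := by
    apply Finset.filter_congr
    intro c _
    exact rel_iff_of_rel h
  have key : ∀ (S T : Finset (Fin (Fintype.card A))) (hS : S.Nonempty) (hT : T.Nonempty),
      S = T → S.min' hS = T.min' hT := by rintro S T hS hT rfl; rfl
  rw [rep, rep]
  exact congrArg _ (key _ _ _ _ (by rw [this]))

lemma rep_idem (a : A) : rep (rep a) = rep a := (rep_eq_of_rel (rel_rep a)).symm

lemma rel_of_rep_eq {a b : A} (h : rep a = rep b) : rel a b := by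
  have h1 : rel a (rep a) := rel_rep a
  have h2 : rel b (rep b) := rel_rep b
  rw [h] at h1
  exact rel_trans h1 (rel_symm h2)

/-! ## MW sets -/

def MW {n : ℕ} (w : Fin n → A) : Set (ℕ → A) := {y | ∀ i : Fin n, rel (w i) (y i.val)}

lemma measurableSet_MW {n : ℕ} (w : Fin n → A) : MeasurableSet (MW w) := by
  have : MW w = ⋂ i : Fin n, (fun y : ℕ → A => y i.val) ⁻¹' atomOf (w i) := by
    ext y; simp [MW, atomOf, Set.mem_iInter]
  rw [this]
  exact MeasurableSet.iInter fun i => (measurable_pi_apply i.val) (measurableSet_atomOf (w i))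

lemma cylW_subset_MW {n : ℕ} (w : Fin n → A) : cylW w ⊆ MW w := by
  intro y hy i
  rw [← hy i]
  exact rel_refl _

lemma MW_congr {n : ℕ} {w w' : Fin n → A} (h : ∀ i, rel (w i) (w' i)) : MW w = MW w' := by
  ext y
  constructor
  · intro hy i; exact rel_trans (rel_symm (h i)) (hy i)
  · intro hy i; exact rel_trans (h i) (hy i)

/-- the sigma-algebra of sets invariant under coordinatewise atom-equivalence -/
def invSpace : MeasurableSpace (ℕ → A) where
  MeasurableSet' S := ∀ y y' : ℕ → A, (∀ i, rel (y i) (y' i)) → y ∈ S → y' ∈ S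
  measurableSet_empty := by intro y y' _ h; exact h.elim
  measurableSet_compl := by
    intro S hS y y' h hy hy'
    exact hy (hS y' y (fun i => rel_symm (h i)) hy')
  measurableSet_iUnion := by
    intro f hf y y' h hy
    rcases Set.mem_iUnion.1 hy with ⟨i, hi⟩
    exact Set.mem_iUnion.2 ⟨i, hf i y y' h hi⟩

lemma mem_of_rel_of_mem {S : Set (ℕ → A)} (hS : MeasurableSet S) {y y' : ℕ → A}
    (h : ∀ i, rel (y i) (y' i)) (hy : y ∈ S) : y' ∈ S := by
  have hle : (MeasurableSpace.pi : MeasurableSpace (ℕ → A)) ≤ invSpace := by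
    rw [MeasurableSpace.pi]
    refine iSup_le fun i => ?_
    rintro S ⟨t, ht, rfl⟩ y y' hrel hy
    exact hrel i t ht hy
  exact hle _ hS y y' h hy

/-- the hull lemma -/
lemma measure_cylW_eq (P : Measure (ℕ → A)) {n : ℕ} (w : Fin n → A) :
    P (cylW w) = P (MW w) := by
  refine le_antisymm (measure_mono (cylW_subset_MW w)) ?_
  rw [measure_eq_iInf (cylW w)]
  refine le_iInf fun t => le_iInf fun hsub => le_iInf fun ht => measure_mono ?_
  intro y hy
  set y' : ℕ → A := fun s => if h : s < n then w ⟨s, h⟩ else y s with hy'def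
  have hy' : y' ∈ cylW w := by
    intro i
    simp only [hy'def, i.isLt, dif_pos]
  have hrel : ∀ i, rel (y' i) (y i) := by
    intro i
    by_cases h : i < n
    · simp only [hy'def, dif_pos h]
      exact hy ⟨i, h⟩
    · simp only [hy'def, dif_neg h]
      exact rel_refl _
  exact mem_of_rel_of_mem ht hrel (hsub hy')

lemma measure_cyl_eq (P : Measure (ℕ → A)) (x : ℕ → A) (n : ℕ) :
    P (cyl x n) = P (MW (fun i : Fin n => x i.val)) := by
  rw [← measure_cylW_eq]
  congr 1
  ext y
  constructor
  · intro hy i; exact hy i.val i.isLt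
  · intro hy i hi; exact hy ⟨i, hi⟩

/-! ## reduced words and the partition -/

def RW (n : ℕ) : Finset (Fin n → A) := Finset.univ.filter (fun v => ∀ i, rep (v i) = v i)

lemma mem_RW {n : ℕ} {v : Fin n → A} : v ∈ RW n ↔ ∀ i, rep (v i) = v i := by
  simp [RW]

lemma red_mem_RW {n : ℕ} (w : Fin n → A) : (fun i => rep (w i)) ∈ RW n :=
  mem_RW.2 fun i => rep_idem (w i)

lemma MW_red {n : ℕ} (w : Fin n → A) : MW w = MW (fun i => rep (w i)) :=
  MW_congr fun i => rel_rep (w i)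

lemma mem_MW_red {n : ℕ} (y : ℕ → A) : y ∈ MW (fun i : Fin n => rep (y i.val)) :=
  fun i => rel_symm (rel_rep (y i.val))

lemma MW_disjoint {n : ℕ} {v v' : Fin n → A} (hv : v ∈ RW n) (hv' : v' ∈ RW n)
    (hne : v ≠ v') : Disjoint (MW v) (MW v') := by
  rw [Set.disjoint_left]
  rintro y hy hy'
  apply hne
  funext i
  rw [← mem_RW.1 hv i, ← mem_RW.1 hv' i]
  exact rep_eq_of_rel (rel_trans (hy i) (rel_symm (hy' i)))

lemma biUnion_RW_subsets (P : Measure (ℕ → A)) {n : ℕ} (T : Finset (Fin n → A))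
    (hT : T ⊆ RW n) : P (⋃ v ∈ T, MW v) = ∑ v ∈ T, P (MW v) := by
  refine measure_biUnion_finset ?_ (fun v _ => measurableSet_MW v)
  intro v hv v' hv' hne
  exact MW_disjoint (hT hv) (hT hv') hne

lemma biUnion_RW_univ {n : ℕ} : ⋃ v ∈ (RW n : Finset (Fin n → A)), MW v = Set.univ := by
  refine Set.eq_univ_of_forall fun y => ?_
  refine Set.mem_biUnion (red_mem_RW (fun i : Fin n => y i.val)) (mem_MW_red y)

lemma sum_RW_measure (P : Measure (ℕ → A)) [IsProbabilityMeasure P] (n : ℕ) :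
    ∑ v ∈ RW n, P (MW v) = 1 := by
  rw [← biUnion_RW_subsets P (RW n) le_rfl, biUnion_RW_univ, measure_univ]

/-- real-valued measure of the atomic cylinder -/
def pw (P : Measure (ℕ → A)) {n : ℕ} (v : Fin n → A) : ℝ := (P (MW v)).toReal

lemma pw_nonneg (P : Measure (ℕ → A)) {n : ℕ} (v : Fin n → A) : 0 ≤ pw P v :=
  ENNReal.toReal_nonneg

lemma pw_le_one (P : Measure (ℕ → A)) [IsProbabilityMeasure P] {n : ℕ} (v : Fin n → A) :
    pw P v ≤ 1 := by
  rw [pw, ← ENNReal.toReal_one]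
  exact ENNReal.toReal_mono ENNReal.one_ne_top prob_le_one

lemma sum_RW_pw (P : Measure (ℕ → A)) [IsProbabilityMeasure P] (n : ℕ) :
    ∑ v ∈ RW n, pw P v = 1 := by
  have := sum_RW_measure P n
  have h2 : (∑ v ∈ RW n, P (MW v)).toReal = 1 := by rw [this]; simp
  rw [← h2, ENNReal.toReal_sum]
  · rfl
  · intro v _; exact measure_ne_top P _

lemma pw_mono (P : Measure (ℕ → A)) [IsProbabilityMeasure P] {n k : ℕ} (h : k ≤ n) (w : Fin n → A) :
    pw P w ≤ pw P (fun i : Fin k => w (Fin.castLE h i)) := by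
  apply ENNReal.toReal_mono (measure_ne_top P _)
  apply measure_mono
  intro y hy i
  exact hy (Fin.castLE h i)

def tl {n : ℕ} (v : Fin (n + 1) → A) : Fin n → A := fun i => v i.succ

lemma tl_mem_RW {n : ℕ} {v : Fin (n + 1) → A} (hv : v ∈ RW (n + 1)) : tl v ∈ RW n :=
  mem_RW.2 fun i => mem_RW.1 hv i.succ

lemma shift_preimage_MW {n : ℕ} {u : Fin n → A} (hu : u ∈ RW n) :
    shift ⁻¹' MW u = ⋃ v ∈ (RW (n + 1)).filter (fun v => tl v = u), MW v := by
  ext y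
  simp only [Set.mem_preimage, Set.mem_iUnion, Finset.mem_filter, exists_prop]
  constructor
  · intro hy
    refine ⟨Fin.cases (rep (y 0)) u, ⟨⟨?_, ?_⟩, ?_⟩⟩
    · refine mem_RW.2 fun i => ?_
      refine Fin.cases ?_ (fun j => ?_) i
      · simp [rep_idem]
      · simp [mem_RW.1 hu j]
    · funext i
      simp [tl]
    · intro i
      refine Fin.cases ?_ (fun j => ?_) i
      · simpa using rel_symm (rel_rep (y 0))
      · simpa [shift] using hy j
  · rintro ⟨v, ⟨⟨_, rfl⟩, hyv⟩⟩
    intro i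
    have := hyv i.succ
    simpa [tl, shift] using this

lemma sum_fiber_measure (P : Measure (ℕ → A)) (hinv : MeasurePreserving (shift : (ℕ → A) → (ℕ → A)) P P)
    {n : ℕ} {u : Fin n → A} (hu : u ∈ RW n) :
    ∑ v ∈ (RW (n + 1)).filter (fun v => tl v = u), P (MW v) = P (MW u) := by
  rw [← biUnion_RW_subsets P _ (Finset.filter_subset _ _), ← shift_preimage_MW hu,
    hinv.measure_preimage (measurableSet_MW u).nullMeasurableSet]

lemma sum_fiber_pw (P : Measure (ℕ → A)) [IsProbabilityMeasure P]
    (hinv : MeasurePreserving (shift : (ℕ → A) → (ℕ → A)) P P)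
    {n : ℕ} {u : Fin n → A} (hu : u ∈ RW n) :
    ∑ v ∈ (RW (n + 1)).filter (fun v => tl v = u), pw P v = pw P u := by
  have := sum_fiber_measure P hinv hu
  have h2 := congrArg ENNReal.toReal this
  rw [ENNReal.toReal_sum (fun v _ => measure_ne_top P _)] at h2
  exact h2

/-! ## the reduced word of a point; simple function structure -/

def redw (x : ℕ → A) (n : ℕ) : Fin n → A := fun i => rep (x i.val)

lemma redw_mem_RW (x : ℕ → A) (n : ℕ) : redw x n ∈ RW n :=
  mem_RW.2 fun i => rep_idem _

lemma mem_MW_redw (x : ℕ → A) (n : ℕ) : x ∈ MW (redw x n) := mem_MW_red x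

lemma redw_eq {n : ℕ} {x : ℕ → A} {v : Fin n → A} (hv : v ∈ RW n) (hx : x ∈ MW v) :
    redw x n = v := by
  funext i
  rw [redw, ← mem_RW.1 hv i]
  exact (rep_eq_of_rel (hx i)).symm

lemma comp_redw_eq_sum {M : Type*} [AddCommMonoid M] {n : ℕ} (G : (Fin n → A) → M) :
    (fun x : ℕ → A => G (redw x n))
      = fun x => ∑ v ∈ RW n, Set.indicator (MW v) (fun _ => G v) x := by
  funext x
  rw [Finset.sum_eq_single (redw x n)]
  · rw [Set.indicator_of_mem (mem_MW_redw x n)]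
  · intro v hv hne
    refine Set.indicator_of_notMem (fun hx => hne ?_) _
    exact (redw_eq hv hx).symm
  · intro h
    exact absurd (redw_mem_RW x n) h

lemma measurable_comp_redw_real {n : ℕ} (G : (Fin n → A) → ℝ) :
    Measurable (fun x : ℕ → A => G (redw x n)) := by
  rw [comp_redw_eq_sum G]
  exact Finset.measurable_sum _ fun v _ =>
    (measurable_const.indicator (measurableSet_MW v))

lemma measurable_comp_redw_ennreal {n : ℕ} (G : (Fin n → A) → ENNReal) :
    Measurable (fun x : ℕ → A => G (redw x n)) := by
  rw [comp_redw_eq_sum G]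
  exact Finset.measurable_sum _ fun v _ =>
    (measurable_const.indicator (measurableSet_MW v))

lemma lintegral_comp_redw (P : Measure (ℕ → A)) {n : ℕ} (G : (Fin n → A) → ENNReal) :
    ∫⁻ x, G (redw x n) ∂P = ∑ v ∈ RW n, G v * P (MW v) := by
  rw [comp_redw_eq_sum G, lintegral_finset_sum]
  · congr 1
    funext v
    exact lintegral_indicator_const (measurableSet_MW v) (G v)
  · exact fun v _ => measurable_const.indicator (measurableSet_MW v)

lemma Zf_eq (P : Measure (ℕ → A)) (n : ℕ) (x : ℕ → A) :
    Zf P (n + 1) x = pw P (tl (redw x (n + 1))) / pw P (redw x (n + 1)) := by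
  have h1 : P (cyl x (n + 1)) = P (MW (redw x (n + 1))) := by
    rw [measure_cyl_eq, MW_red]; rfl
  have h2 : P (cyl (shift x) (n + 1 - 1)) = P (MW (tl (redw x (n + 1)))) := by
    rw [Nat.add_sub_cancel, measure_cyl_eq, MW_red]
    rfl
  rw [Zf, h1, h2, pw, pw]

/-! ## entropies of reduced words -/

def Hbar (P : Measure (ℕ → A)) (n : ℕ) : ℝ := ∑ v ∈ RW n, Real.negMulLog (pw P v)

def abar (P : Measure (ℕ → A)) (n : ℕ) : ℝ := Hbar P (n + 1) - Hbar P n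

def cV (P : Measure (ℕ → A)) {n : ℕ} (v : Fin (n + 1) → A) : ℝ :=
  Real.log (pw P (tl v) / pw P v)

variable (P : Measure (ℕ → A)) [IsProbabilityMeasure P]

lemma pw_le_tl (hinv : MeasurePreserving (shift : (ℕ → A) → (ℕ → A)) P P) {n : ℕ} (v : Fin (n + 1) → A) : pw P v ≤ pw P (tl v) := by
  refine ENNReal.toReal_mono (measure_ne_top P _) ?_
  have hsub : MW v ⊆ shift ⁻¹' MW (tl v) := by
    intro y hy i
    exact hy i.succ
  calc P (MW v) ≤ P (shift ⁻¹' MW (tl v)) := measure_mono hsub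
    _ = P (MW (tl v)) := hinv.measure_preimage (measurableSet_MW _).nullMeasurableSet

lemma cV_nonneg (hinv : MeasurePreserving (shift : (ℕ → A) → (ℕ → A)) P P) {n : ℕ} (v : Fin (n + 1) → A) : 0 ≤ cV P v := by
  rcases eq_or_lt_of_le (pw_nonneg P v) with h | h
  · simp [cV, ← h]
  · exact Real.log_nonneg ((one_le_div h).2 (pw_le_tl P hinv v))

lemma card_fiber_le {n : ℕ} (u : Fin n → A) :
    ((RW (n + 1)).filter (fun v => tl v = u)).card ≤ Fintype.card A := by
  have : ((RW (n + 1)).filter (fun v => tl v = u)).card ≤ (Finset.univ : Finset A).card := by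
    refine Finset.card_le_card_of_injOn (fun v => v 0) (fun v _ => Finset.mem_univ _) ?_
    intro v hv v' hv' h0
    have htv : tl v = tl v' := by
      rw [(Finset.mem_filter.1 hv).2, (Finset.mem_filter.1 hv').2]
    funext i
    refine Fin.cases ?_ (fun j => ?_) i
    · exact h0
    · exact congrFun htv j
  simpa using this

lemma sum_pw_tl_le (n : ℕ) :
    ∑ v ∈ RW (n + 1), pw P (tl v) ≤ (Fintype.card A : ℝ) := by
  rw [← Finset.sum_fiberwise_of_maps_to (fun v hv => tl_mem_RW hv) (fun v => pw P (tl v))]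
  calc ∑ u ∈ RW n, ∑ v ∈ (RW (n + 1)).filter (fun v => tl v = u), pw P (tl v)
      = ∑ u ∈ RW n, ∑ v ∈ (RW (n + 1)).filter (fun v => tl v = u), pw P u := by
        refine Finset.sum_congr rfl fun u _ => Finset.sum_congr rfl fun v hv => ?_
        rw [(Finset.mem_filter.1 hv).2]
    _ = ∑ u ∈ RW n, (((RW (n + 1)).filter (fun v => tl v = u)).card : ℝ) * pw P u := by
        simp [Finset.sum_const, nsmul_eq_mul]
    _ ≤ ∑ u ∈ RW n, (Fintype.card A : ℝ) * pw P u := by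
        refine Finset.sum_le_sum fun u _ => ?_
        exact mul_le_mul_of_nonneg_right (by exact_mod_cast card_fiber_le u) (pw_nonneg P u)
    _ = (Fintype.card A : ℝ) * ∑ u ∈ RW n, pw P u := by rw [Finset.mul_sum]
    _ = (Fintype.card A : ℝ) := by rw [sum_RW_pw P n, mul_one]

lemma sum_cV_pw_eq_abar (hinv : MeasurePreserving (shift : (ℕ → A) → (ℕ → A)) P P) (n : ℕ) :
    ∑ v ∈ RW (n + 1), cV P v * pw P v = abar P n := by
  have per : ∀ v : Fin (n + 1) → A,
      cV P v * pw P v = pw P v * Real.log (pw P (tl v)) - pw P v * Real.log (pw P v) := by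
    intro v
    rcases eq_or_lt_of_le (pw_nonneg P v) with h | h
    · simp [← h]
    · have htl : pw P (tl v) ≠ 0 := by
        have := lt_of_lt_of_le h (pw_le_tl P hinv v)
        positivity
      rw [cV, Real.log_div htl (ne_of_gt h)]
      ring
  rw [Finset.sum_congr rfl (fun v _ => per v), Finset.sum_sub_distrib]
  have h1 : ∑ v ∈ RW (n + 1), pw P v * Real.log (pw P (tl v))
      = ∑ u ∈ RW n, pw P u * Real.log (pw P u) := by
    rw [← Finset.sum_fiberwise_of_maps_to (fun v hv => tl_mem_RW hv)
      (fun v => pw P v * Real.log (pw P (tl v)))]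
    refine Finset.sum_congr rfl fun u hu => ?_
    calc ∑ v ∈ (RW (n + 1)).filter (fun v => tl v = u), pw P v * Real.log (pw P (tl v))
        = ∑ v ∈ (RW (n + 1)).filter (fun v => tl v = u), pw P v * Real.log (pw P u) := by
          refine Finset.sum_congr rfl fun v hv => ?_
          rw [(Finset.mem_filter.1 hv).2]
      _ = (∑ v ∈ (RW (n + 1)).filter (fun v => tl v = u), pw P v) * Real.log (pw P u) := by
          rw [Finset.sum_mul]
      _ = pw P u * Real.log (pw P u) := by rw [sum_fiber_pw P hinv hu, mul_comm]
  rw [h1, abar, Hbar, Hbar]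
  simp only [Real.negMulLog, neg_mul, Finset.sum_neg_distrib]
  ring

lemma abar_nonneg (hinv : MeasurePreserving (shift : (ℕ → A) → (ℕ → A)) P P) (n : ℕ) : 0 ≤ abar P n := by
  rw [← sum_cV_pw_eq_abar P hinv n]
  exact Finset.sum_nonneg fun v _ => mul_nonneg (cV_nonneg P hinv v) (pw_nonneg P v)

lemma abar_le_card (hinv : MeasurePreserving (shift : (ℕ → A) → (ℕ → A)) P P) (n : ℕ) : abar P n ≤ (Fintype.card A : ℝ) := by
  rw [← sum_cV_pw_eq_abar P hinv n]
  refine le_trans (Finset.sum_le_sum (fun v _ => ?_)) (sum_pw_tl_le P n)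
  rcases eq_or_lt_of_le (pw_nonneg P v) with h | h
  · rw [← h, mul_zero]; exact pw_nonneg P _
  · have hr : 0 < pw P (tl v) / pw P v :=
      div_pos (lt_of_lt_of_le h (pw_le_tl P hinv v)) h
    calc cV P v * pw P v ≤ (pw P (tl v) / pw P v - 1) * pw P v := by
          exact mul_le_mul_of_nonneg_right (Real.log_le_sub_one_of_pos hr) (le_of_lt h)
      _ = pw P (tl v) - pw P v := by field_simp
      _ ≤ pw P (tl v) := by linarith [pw_nonneg P v]

lemma lintegral_logZf (hinv : MeasurePreserving (shift : (ℕ → A) → (ℕ → A)) P P) (n : ℕ) :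
    ∫⁻ x, ENNReal.ofReal (Real.log (Zf P (n + 1) x)) ∂P = ENNReal.ofReal (abar P n) := by
  have hfun : (fun x : ℕ → A => ENNReal.ofReal (Real.log (Zf P (n + 1) x)))
      = fun x => (fun v => ENNReal.ofReal (cV P v)) (redw x (n + 1)) := by
    funext x
    rw [Zf_eq]
    rfl
  rw [hfun]
  rw [lintegral_comp_redw P (fun v => ENNReal.ofReal (cV P v))]
  have hterm : ∀ v ∈ RW (n + 1),
      ENNReal.ofReal (cV P v) * P (MW v) = ENNReal.ofReal (cV P v * pw P v) := by
    intro v _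
    rw [← ENNReal.ofReal_toReal (measure_ne_top P (MW v)),
      ← ENNReal.ofReal_mul (cV_nonneg P hinv v)]
    rfl
  rw [Finset.sum_congr rfl hterm,
    ← ENNReal.ofReal_sum_of_nonneg
      (fun v _ => mul_nonneg (cV_nonneg P hinv v) (pw_nonneg P v)),
    sum_cV_pw_eq_abar P hinv n]

lemma lintegral_Zf_le (n : ℕ) :
    ∫⁻ x, ENNReal.ofReal (Zf P (n + 1) x) ∂P ≤ (Fintype.card A : ENNReal) := by
  have hfun : (fun x : ℕ → A => ENNReal.ofReal (Zf P (n + 1) x))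
      = fun x => (fun v => ENNReal.ofReal (pw P (tl v) / pw P v)) (redw x (n + 1)) := by
    funext x
    rw [Zf_eq]
  rw [hfun]
  rw [lintegral_comp_redw P (fun v => ENNReal.ofReal (pw P (tl v) / pw P v))]
  have hterm : ∀ v ∈ RW (n + 1),
      ENNReal.ofReal (pw P (tl v) / pw P v) * P (MW v) ≤ ENNReal.ofReal (pw P (tl v)) := by
    intro v _
    rw [← ENNReal.ofReal_toReal (measure_ne_top P (MW v)),
      ← ENNReal.ofReal_mul (div_nonneg (pw_nonneg P _) (pw_nonneg P _))]
    refine ENNReal.ofReal_le_ofReal ?_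
    show pw P (tl v) / pw P v * pw P v ≤ pw P (tl v)
    rcases eq_or_lt_of_le (pw_nonneg P v) with h | h
    · rw [← h, mul_zero]; exact pw_nonneg P _
    · rw [div_mul_cancel₀ _ (ne_of_gt h)]
  calc ∑ v ∈ RW (n + 1), ENNReal.ofReal (pw P (tl v) / pw P v) * P (MW v)
      ≤ ∑ v ∈ RW (n + 1), ENNReal.ofReal (pw P (tl v)) := Finset.sum_le_sum hterm
    _ = ENNReal.ofReal (∑ v ∈ RW (n + 1), pw P (tl v)) := by
        rw [ENNReal.ofReal_sum_of_nonneg (fun v _ => pw_nonneg P _)]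
    _ ≤ ENNReal.ofReal (Fintype.card A : ℝ) := ENNReal.ofReal_le_ofReal (sum_pw_tl_le P n)
    _ = (Fintype.card A : ENNReal) := ENNReal.ofReal_natCast _

/-! ## analysis: convergence of the integrals -/

lemma measurable_Zf (n : ℕ) : Measurable (Zf P (n + 1)) := by
  have : Zf P (n + 1) = fun x => (fun v => pw P (tl v) / pw P v) (redw x (n + 1)) := by
    funext x; exact Zf_eq P n x
  rw [this]
  exact measurable_comp_redw_real (fun v => pw P (tl v) / pw P v)

lemma measurable_ofReal_logZf (n : ℕ) :
    Measurable fun x => ENNReal.ofReal (Real.log (Zf P (n + 1) x)) :=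
  (ENNReal.measurable_ofReal.comp Real.measurable_log).comp (measurable_Zf P n)

lemma logZf_nonneg (hinv : MeasurePreserving (shift : (ℕ → A) → (ℕ → A)) P P)
    (n : ℕ) (x : ℕ → A) : 0 ≤ Real.log (Zf P (n + 1) x) := by
  rw [Zf_eq]
  rcases eq_or_lt_of_le (pw_nonneg P (redw x (n + 1))) with h | h
  · rw [← h, div_zero, Real.log_zero]
  · exact Real.log_nonneg ((one_le_div h).2 (pw_le_tl P hinv _))

lemma Zf_nonneg (n : ℕ) (x : ℕ → A) : 0 ≤ Zf P (n + 1) x := by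
  rw [Zf_eq]
  exact div_nonneg (pw_nonneg P _) (pw_nonneg P _)

/-- a.e., all atomic cylinders around `x` have positive measure, hence `Zf ≥ 1`. -/
lemma ae_one_le_Zf (hinv : MeasurePreserving (shift : (ℕ → A) → (ℕ → A)) P P) :
    ∀ᵐ x ∂P, ∀ n : ℕ, 1 ≤ Zf P (n + 1) x := by
  have hnull : ∀ n : ℕ, P (⋃ v ∈ (RW n).filter (fun v => P (MW v) = 0), MW v) = 0 := by
    intro n
    rw [biUnion_RW_subsets P _ (Finset.filter_subset _ _)]
    exact Finset.sum_eq_zero fun v hv => (Finset.mem_filter.1 hv).2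
  have hae : ∀ᵐ x ∂P, ∀ n : ℕ, x ∉ ⋃ v ∈ (RW n).filter (fun v => P (MW v) = 0), MW v := by
    rw [MeasureTheory.ae_all_iff]
    intro n
    exact (MeasureTheory.measure_eq_zero_iff_ae_notMem).1 (hnull n)
  refine hae.mono fun x hx n => ?_
  have hpos : 0 < pw P (redw x (n + 1)) := by
    have hne : P (MW (redw x (n + 1))) ≠ 0 := by
      intro h0
      exact hx (n + 1) (Set.mem_biUnion
        (Finset.mem_filter.2 ⟨redw_mem_RW x (n + 1), h0⟩) (mem_MW_redw x (n + 1)))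
    exact ENNReal.toReal_pos hne (measure_ne_top P _)
  rw [Zf_eq]
  exact (one_le_div hpos).2 (pw_le_tl P hinv _)

/-- elementary real inequality for the uniform integrability bound -/
lemma log_le_min_add {t K : ℝ} (ht : 0 ≤ t) (hK : 0 ≤ K) :
    Real.log t ≤ min (Real.log t) K + 2 * Real.exp (-(K / 2)) * t := by
  rcases le_or_gt (Real.log t) K with h | h
  · have : 0 ≤ 2 * Real.exp (-(K / 2)) * t := by positivity
    rw [min_eq_left h]
    linarith
  · rw [min_eq_right h.le]
    have ht1 : (1 : ℝ) < t := by
      by_contra hc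
      push_neg at hc
      have : Real.log t ≤ 0 := Real.log_nonpos ht hc
      linarith
    have htpos : (0 : ℝ) < t := by linarith
    have hexpK : Real.exp K ≤ t := by
      have := Real.exp_log htpos
      calc Real.exp K ≤ Real.exp (Real.log t) := Real.exp_le_exp.2 h.le
        _ = t := this
    have hsq : Real.exp (K / 2) ≤ Real.sqrt t := by
      rw [Real.le_sqrt (Real.exp_pos _).le ht]
      calc Real.exp (K / 2) ^ 2 = Real.exp (K / 2) * Real.exp (K / 2) := sq (Real.exp (K / 2))
        _ = Real.exp (K / 2 + K / 2) := (Real.exp_add _ _).symm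
        _ = Real.exp K := by ring_nf
        _ ≤ t := hexpK
    have hsqrtpos : (0 : ℝ) < Real.sqrt t := Real.sqrt_pos.2 htpos
    have hlogs : Real.log t = 2 * Real.log (Real.sqrt t) := by
      rw [Real.log_sqrt ht]; ring
    have h1 : Real.log (Real.sqrt t) ≤ Real.sqrt t := by
      have := Real.log_le_sub_one_of_pos hsqrtpos
      linarith
    have h2 : Real.sqrt t ≤ Real.exp (-(K / 2)) * t := by
      rw [Real.exp_neg]
      rw [inv_mul_eq_div, le_div_iff₀ (Real.exp_pos _)]
      calc Real.sqrt t * Real.exp (K / 2) ≤ Real.sqrt t * Real.sqrt t :=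
            mul_le_mul_of_nonneg_left hsq hsqrtpos.le
        _ = t := Real.mul_self_sqrt ht
    nlinarith [hK, htpos]

lemma Hbar_zero : Hbar P 0 = 0 := by
  refine Finset.sum_eq_zero fun v _ => ?_
  have : MW v = Set.univ := Set.eq_univ_of_forall fun y => fun i => i.elim0
  rw [pw, this, measure_univ]
  simp [Real.negMulLog]

lemma Hbar_eq_sum (n : ℕ) : Hbar P n = ∑ k ∈ Finset.range n, abar P k := by
  induction n with
  | zero => simpa using Hbar_zero P
  | succ n ih => rw [Finset.sum_range_succ, ← ih, abar]; ring

/-- Main analytic lemma: the integral of `log ZL` equals the limit of `Hbar n / n`. -/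
lemma main_analysis (hinv : MeasurePreserving (shift : (ℕ → A) → (ℕ → A)) P P)
    (ZL : (ℕ → A) → ℝ)
    (hZL : ∀ᵐ x ∂P, Tendsto (fun n : ℕ => Zf P (n + 1) x) atTop (nhds (ZL x))) :
    ∃ hbar : ℝ, Tendsto (fun n : ℕ => Hbar P n / n) atTop (nhds hbar) ∧
      ∫ x, Real.log (ZL x) ∂P = hbar := by
  classical
  set Ln : ℕ → ENNReal := fun n => ∫⁻ x, ENNReal.ofReal (Real.log (Zf P (n + 1) x)) ∂P with hLn
  have hLn_eq : ∀ n, Ln n = ENNReal.ofReal (abar P n) := fun n => lintegral_logZf P hinv n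
  -- a.e. facts
  have hae1 : ∀ᵐ x ∂P, 1 ≤ ZL x := by
    filter_upwards [hZL, ae_one_le_Zf P hinv] with x hx h1
    exact ge_of_tendsto' hx fun n => h1 n
  have haelog : ∀ᵐ x ∂P,
      Tendsto (fun n : ℕ => Real.log (Zf P (n + 1) x)) atTop (nhds (Real.log (ZL x))) := by
    filter_upwards [hZL, hae1] with x hx h1
    exact ((Real.continuousAt_log (by linarith)).tendsto.comp hx)
  have haeofReal : ∀ᵐ x ∂P,
      Tendsto (fun n : ℕ => ENNReal.ofReal (Real.log (Zf P (n + 1) x))) atTop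
        (nhds (ENNReal.ofReal (Real.log (ZL x)))) := by
    filter_upwards [haelog] with x hx
    exact ENNReal.tendsto_ofReal hx
  set L : ENNReal := ∫⁻ x, ENNReal.ofReal (Real.log (ZL x)) ∂P with hLdef
  -- Fatou
  have hFatou : L ≤ Filter.liminf Ln Filter.atTop := by
    have hcongr : L = ∫⁻ x,
        Filter.liminf (fun n : ℕ => ENNReal.ofReal (Real.log (Zf P (n + 1) x))) Filter.atTop ∂P := by
      refine lintegral_congr_ae ?_
      filter_upwards [haeofReal] with x hx
      exact hx.liminf_eq.symm
    rw [hcongr]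
    exact lintegral_liminf_le fun n => measurable_ofReal_logZf P n
  have hLn_le : ∀ n, Ln n ≤ ENNReal.ofReal (Fintype.card A : ℝ) := by
    intro n
    rw [hLn_eq n]
    exact ENNReal.ofReal_le_ofReal (abar_le_card P hinv n)
  -- uniform integrability bound
  have hUI : ∀ K : ℝ, 0 ≤ K → Filter.limsup Ln Filter.atTop
      ≤ L + ENNReal.ofReal (2 * Real.exp (-(K / 2)) * (Fintype.card A : ℝ)) := by
    intro K hK
    set c : ENNReal := ENNReal.ofReal (2 * Real.exp (-(K / 2))) with hc
    set F : ℕ → (ℕ → A) → ENNReal :=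
      fun n x => min (ENNReal.ofReal (Real.log (Zf P (n + 1) x))) (ENNReal.ofReal K) with hF
    have hFmeas : ∀ n, Measurable (F n) :=
      fun n => (measurable_ofReal_logZf P n).min measurable_const
    have hpoint : ∀ n x, ENNReal.ofReal (Real.log (Zf P (n + 1) x))
        ≤ F n x + c * ENNReal.ofReal (Zf P (n + 1) x) := by
      intro n x
      have hreal := log_le_min_add (Zf_nonneg P n x) hK
      calc ENNReal.ofReal (Real.log (Zf P (n + 1) x))
          ≤ ENNReal.ofReal (min (Real.log (Zf P (n + 1) x)) K
              + 2 * Real.exp (-(K / 2)) * Zf P (n + 1) x) := ENNReal.ofReal_le_ofReal hreal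
        _ = ENNReal.ofReal (min (Real.log (Zf P (n + 1) x)) K)
              + ENNReal.ofReal (2 * Real.exp (-(K / 2)) * Zf P (n + 1) x) := by
            exact ENNReal.ofReal_add (le_min (logZf_nonneg P hinv n x) hK)
              (mul_nonneg (by positivity) (Zf_nonneg P n x))
        _ ≤ F n x + c * ENNReal.ofReal (Zf P (n + 1) x) := by
            refine add_le_add ?_ ?_
            · refine le_min ?_ ?_
              · exact le_trans (ENNReal.ofReal_le_ofReal (min_le_left _ _)) le_rfl
              · exact le_trans (ENNReal.ofReal_le_ofReal (min_le_right _ _)) le_rfl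
            · rw [hc, ← ENNReal.ofReal_mul (by positivity)]
    have hLnK : ∀ n, Ln n ≤ (∫⁻ x, F n x ∂P) + c * (Fintype.card A : ENNReal) := by
      intro n
      calc Ln n ≤ ∫⁻ x, (F n x + c * ENNReal.ofReal (Zf P (n + 1) x)) ∂P :=
            lintegral_mono fun x => hpoint n x
        _ = (∫⁻ x, F n x ∂P) + ∫⁻ x, c * ENNReal.ofReal (Zf P (n + 1) x) ∂P :=
            lintegral_add_left (hFmeas n) _
        _ = (∫⁻ x, F n x ∂P) + c * ∫⁻ x, ENNReal.ofReal (Zf P (n + 1) x) ∂P := by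
            rw [lintegral_const_mul c (measurable_Zf P n).ennreal_ofReal]
        _ ≤ (∫⁻ x, F n x ∂P) + c * (Fintype.card A : ENNReal) := by
            exact add_le_add le_rfl (mul_le_mul_right (lintegral_Zf_le P n) c)
    have hDCT : Tendsto (fun n => ∫⁻ x, F n x ∂P) atTop
        (nhds (∫⁻ x, min (ENNReal.ofReal (Real.log (ZL x))) (ENNReal.ofReal K) ∂P)) := by
      refine tendsto_lintegral_of_dominated_convergence (fun _ => ENNReal.ofReal K)
        hFmeas (fun n => Filter.Eventually.of_forall fun x => min_le_right _ _) ?_ ?_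
      · rw [lintegral_const]
        exact ENNReal.mul_ne_top ENNReal.ofReal_ne_top (measure_ne_top P _)
      · filter_upwards [haeofReal] with x hx
        exact hx.min tendsto_const_nhds
    have hminle : (∫⁻ x, min (ENNReal.ofReal (Real.log (ZL x))) (ENNReal.ofReal K) ∂P) ≤ L :=
      lintegral_mono fun x => min_le_left _ _
    have htendadd : Tendsto (fun n => (∫⁻ x, F n x ∂P) + c * (Fintype.card A : ENNReal)) atTop
        (nhds ((∫⁻ x, min (ENNReal.ofReal (Real.log (ZL x))) (ENNReal.ofReal K) ∂P)
          + c * (Fintype.card A : ENNReal))) :=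
      hDCT.add tendsto_const_nhds
    calc Filter.limsup Ln Filter.atTop
        ≤ Filter.limsup (fun n => (∫⁻ x, F n x ∂P) + c * (Fintype.card A : ENNReal))
            Filter.atTop := Filter.limsup_le_limsup (Filter.Eventually.of_forall hLnK)
      _ = (∫⁻ x, min (ENNReal.ofReal (Real.log (ZL x))) (ENNReal.ofReal K) ∂P)
            + c * (Fintype.card A : ENNReal) := htendadd.limsup_eq
      _ ≤ L + c * (Fintype.card A : ENNReal) := add_le_add hminle le_rfl
      _ = L + ENNReal.ofReal (2 * Real.exp (-(K / 2)) * (Fintype.card A : ℝ)) := by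
          rw [hc, ← ENNReal.ofReal_natCast (Fintype.card A), ← ENNReal.ofReal_mul (by positivity)]
  -- limsup Ln ≤ L
  have hlimsup_le : Filter.limsup Ln Filter.atTop ≤ L := by
    refine ENNReal.le_of_forall_pos_le_add fun ε hε _ => ?_
    set δ : ℝ := (ε : ℝ) / (2 * ((Fintype.card A : ℝ) + 1)) with hδ
    have hδpos : 0 < δ := by
      have : (0 : ℝ) < (ε : ℝ) := by exact_mod_cast hε
      positivity
    set K : ℝ := max 0 (-2 * Real.log δ) with hKdef
    have hKnn : 0 ≤ K := le_max_left _ _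
    have hexp : Real.exp (-(K / 2)) ≤ δ := by
      have h1 : -2 * Real.log δ ≤ K := le_max_right _ _
      have h2 : -(K / 2) ≤ Real.log δ := by linarith
      calc Real.exp (-(K / 2)) ≤ Real.exp (Real.log δ) := Real.exp_le_exp.2 h2
        _ = δ := Real.exp_log hδpos
    refine le_trans (hUI K hKnn) (add_le_add le_rfl ?_)
    have hreal : 2 * Real.exp (-(K / 2)) * (Fintype.card A : ℝ) ≤ (ε : ℝ) := by
      have h3 : 2 * Real.exp (-(K / 2)) * (Fintype.card A : ℝ) ≤ 2 * δ * (Fintype.card A : ℝ) := by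
        have := mul_le_mul_of_nonneg_right (mul_le_mul_of_nonneg_left hexp (by norm_num : (0:ℝ) ≤ 2))
          (Nat.cast_nonneg (Fintype.card A))
        linarith
      have h4 : 2 * δ * (Fintype.card A : ℝ) ≤ (ε : ℝ) := by
        have hc1 : (0 : ℝ) < 2 * ((Fintype.card A : ℝ) + 1) := by positivity
        have key : δ * (2 * ((Fintype.card A : ℝ) + 1)) = (ε : ℝ) := by
          rw [hδ]; field_simp
        nlinarith [hδpos.le, Nat.cast_nonneg (α := ℝ) (Fintype.card A)]
      linarith
    calc ENNReal.ofReal (2 * Real.exp (-(K / 2)) * (Fintype.card A : ℝ))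
        ≤ ENNReal.ofReal (ε : ℝ) := ENNReal.ofReal_le_ofReal hreal
      _ = (ε : ENNReal) := ENNReal.ofReal_coe_nnreal
  -- convergence of Ln to L
  have hliminf_eq : Filter.liminf Ln Filter.atTop = L :=
    le_antisymm (le_trans Filter.liminf_le_limsup hlimsup_le) hFatou
  have hlimsup_eq : Filter.limsup Ln Filter.atTop = L :=
    le_antisymm hlimsup_le (hFatou.trans Filter.liminf_le_limsup)
  have htendL : Tendsto Ln atTop (nhds L) := tendsto_of_liminf_eq_limsup hliminf_eq hlimsup_eq
  have hLne : L ≠ ⊤ := by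
    have h1 : Filter.liminf Ln Filter.atTop ≤ ENNReal.ofReal (Fintype.card A : ℝ) := by
      calc Filter.liminf Ln Filter.atTop
          ≤ Filter.liminf (fun _ : ℕ => ENNReal.ofReal (Fintype.card A : ℝ)) Filter.atTop :=
            Filter.liminf_le_liminf (Filter.Eventually.of_forall hLn_le)
        _ = ENNReal.ofReal (Fintype.card A : ℝ) := Filter.liminf_const _
    exact ne_top_of_le_ne_top ENNReal.ofReal_ne_top (le_trans hFatou h1)
  -- abar converges to L.toReal
  have habar : Tendsto (abar P) atTop (nhds L.toReal) := by
    have h1 : Tendsto (fun n => (Ln n).toReal) atTop (nhds L.toReal) :=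
      (ENNReal.tendsto_toReal hLne).comp htendL
    have h2 : (fun n => (Ln n).toReal) = abar P := by
      funext n
      rw [hLn_eq n, ENNReal.toReal_ofReal (abar_nonneg P hinv n)]
    rwa [h2] at h1
  -- Cesàro
  have hcesaro : Tendsto (fun n : ℕ => Hbar P n / n) atTop (nhds L.toReal) := by
    have h1 := habar.cesaro
    refine h1.congr fun n => ?_
    rw [← Hbar_eq_sum P n, inv_mul_eq_div]
  -- the integral
  have hZLmeas : AEMeasurable ZL P :=
    aemeasurable_of_tendsto_metrizable_ae atTop (fun n => (measurable_Zf P n).aemeasurable) hZL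
  have hint : ∫ x, Real.log (ZL x) ∂P = L.toReal := by
    have hge : 0 ≤ᵐ[P] fun x => Real.log (ZL x) := by
      filter_upwards [hae1] with x hx
      exact Real.log_nonneg hx
    rw [integral_eq_lintegral_of_nonneg_ae hge
      (Real.measurable_log.comp_aemeasurable hZLmeas).aestronglyMeasurable]
  exact ⟨L.toReal, hcesaro, hint⟩

/-! ## relating `Hn` to `Hbar`: the dichotomy -/

lemma Hn_eq_sum_pw (n : ℕ) : Hn P n = ∑ w : Fin n → A, Real.negMulLog (pw P w) := by
  refine Finset.sum_congr rfl fun w _ => ?_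
  rw [pw, measure_cylW_eq]

lemma Hbar_le_Hn (n : ℕ) : Hbar P n ≤ Hn P n := by
  rw [Hn_eq_sum_pw]
  refine Finset.sum_le_sum_of_subset_of_nonneg (Finset.subset_univ _) fun w _ _ =>
    Real.negMulLog_nonneg (pw_nonneg P w) (pw_le_one P w)

lemma Hn_eq_Hbar_of
    (h : ∀ (n : ℕ) (w : Fin n → A), (∀ i, rep (w i) = w i) ∨ P (MW w) = 0 ∨ P (MW w) = 1)
    (n : ℕ) : Hn P n = Hbar P n := by
  rw [Hn_eq_sum_pw]
  refine (Finset.sum_subset (Finset.subset_univ (RW n)) fun w _ hw => ?_).symm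
  rcases h n w with hred | h0 | h1
  · exact absurd (mem_RW.2 hred) hw
  · rw [pw, h0]
    simp [Real.negMulLog]
  · rw [pw, h1]
    simp [Real.negMulLog]

lemma MW_eq_or_disjoint {n : ℕ} (u w : Fin n → A) :
    MW u = MW w ∨ Disjoint (MW u) (MW w) := by
  by_cases h : (MW u ∩ MW w).Nonempty
  · left
    rcases h with ⟨y, hyu, hyw⟩
    exact MW_congr fun i => rel_trans (hyu i) (rel_symm (hyw i))
  · right
    rw [Set.not_nonempty_iff_eq_empty] at h
    exact Set.disjoint_iff_inter_eq_empty.2 h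

lemma shift_iterate_apply (s : ℕ) (y : ℕ → A) (u : ℕ) : (shift^[s] y) u = y (u + s) := by
  induction s generalizing y u with
  | zero => simp
  | succ s ih =>
    rw [Function.iterate_succ_apply, ih (shift y) u]
    rfl

lemma one_add_cast_le_two_pow (r : ℕ) :
    1 + (r : ℝ) + ((r : ℝ) ^ 2 - (r : ℝ)) / 2 ≤ 2 ^ r := by
  induction r with
  | zero => norm_num
  | succ r ih =>
    have h2 : (2 : ℝ) ^ (r + 1) = 2 * 2 ^ r := by ring
    push_cast
    rw [h2]
    have hr : (0 : ℝ) ≤ (r : ℝ) := Nat.cast_nonneg r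
    have hrr : (r : ℝ) ≤ (r : ℝ) ^ 2 := by
      rcases Nat.eq_zero_or_pos r with h | h
      · subst h; norm_num
      · have h1 : (1 : ℝ) ≤ (r : ℝ) := by exact_mod_cast h
        nlinarith
    nlinarith [ih]

lemma negMulLog_ge {p c : ℝ} (hp : 0 ≤ p) (hc : 0 < c) (hpc : p ≤ c) :
    p * (-Real.log c) ≤ Real.negMulLog p := by
  rcases eq_or_lt_of_le hp with h | h
  · simp [← h, Real.negMulLog]
  · have := Real.log_le_log h hpc
    rw [Real.negMulLog]
    nlinarith

/-! ## the blow-up argument -/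

def idx {k m : ℕ} (j : Fin m) (i : Fin k) : Fin (k * m) :=
  ⟨j.val * k + i.val, by
    calc j.val * k + i.val < j.val * k + k := by omega
      _ = (j.val + 1) * k := by ring
      _ ≤ m * k := Nat.mul_le_mul_right k j.isLt
      _ = k * m := Nat.mul_comm m k⟩

lemma idx_inj {k m : ℕ} (hk : 0 < k) {j j' : Fin m} {i : Fin k}
    (h : (idx j i : Fin (k * m)) = idx j' i) : j = j' := by
  have hval : j.val * k + i.val = j'.val * k + i.val := congrArg Fin.val h
  have : j.val * k = j'.val * k := by omega
  exact Fin.ext (Nat.eq_of_mul_eq_mul_right hk this)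

def BJ {k m : ℕ} (w₀ : Fin k → A) (v : Fin (k * m) → A) (j : Fin m) : Prop :=
  ∀ i : Fin k, rel (w₀ i) (v (idx j i))

def rv {k m : ℕ} (w₀ : Fin k → A) (v : Fin (k * m) → A) : ℕ :=
  ((Finset.univ : Finset (Fin m)).filter (fun j => BJ w₀ v j)).card

variable (P : Measure (ℕ → A)) [IsProbabilityMeasure P]

lemma sumG (hinv : MeasurePreserving (shift : (ℕ → A) → (ℕ → A)) P P)
    {k m : ℕ} (w₀ : Fin k → A) (j : Fin m) :
    ∑ v ∈ (RW (k * m)).filter (fun v => BJ w₀ v j), pw P v = pw P w₀ := by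
  have hset : (⋃ v ∈ (RW (k * m)).filter (fun v => BJ w₀ v j), MW v)
      = shift^[j.val * k] ⁻¹' MW w₀ := by
    ext y
    simp only [Set.mem_iUnion, Set.mem_preimage, Finset.mem_filter, exists_prop]
    constructor
    · rintro ⟨v, ⟨⟨hv, hBj⟩, hy⟩⟩
      intro i
      rw [shift_iterate_apply]
      have h1 : rel (w₀ i) (v (idx j i)) := hBj i
      have h2 : rel (v (idx j i)) (y ((idx j i : Fin (k * m)).val)) := hy (idx j i)
      have h3 : ((idx j i : Fin (k * m)).val) = i.val + j.val * k := by
        show j.val * k + i.val = i.val + j.val * k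
        omega
      rw [h3] at h2
      exact rel_trans h1 h2
    · intro hy
      refine ⟨redw y (k * m), ⟨⟨redw_mem_RW y (k * m), fun i => ?_⟩, mem_MW_redw y (k * m)⟩⟩
      have h1 : rel (w₀ i) (y (i.val + j.val * k)) := by
        have := hy i
        rwa [shift_iterate_apply] at this
      have h2 : rel (y (i.val + j.val * k)) (rep (y (i.val + j.val * k))) :=
        rel_rep _
      have h3 : redw y (k * m) (idx j i) = rep (y (i.val + j.val * k)) := by
        have hval : ((idx j i : Fin (k * m)).val) = i.val + j.val * k := by
          show j.val * k + i.val = i.val + j.val * k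
          omega
        rw [redw, hval]
      rw [h3]
      exact rel_trans h1 h2
  have hmeas : ∑ v ∈ (RW (k * m)).filter (fun v => BJ w₀ v j), P (MW v) = P (MW w₀) := by
    rw [← biUnion_RW_subsets P _ (Finset.filter_subset _ _), hset,
      (hinv.iterate (j.val * k)).measure_preimage (measurableSet_MW w₀).nullMeasurableSet]
  have h2 := congrArg ENNReal.toReal hmeas
  rwa [ENNReal.toReal_sum (fun v _ => measure_ne_top P _)] at h2

lemma sum_pw_rv (hinv : MeasurePreserving (shift : (ℕ → A) → (ℕ → A)) P P)
    {k m : ℕ} (w₀ : Fin k → A) :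
    ∑ v ∈ RW (k * m), pw P v * (rv w₀ v : ℝ) = m * pw P w₀ := by
  have hcast : ∀ v : Fin (k * m) → A, ((rv w₀ v : ℝ))
      = ∑ j : Fin m, (if BJ w₀ v j then (1 : ℝ) else 0) := by
    intro v
    rw [rv, Finset.card_filter]
    push_cast
    rfl
  calc ∑ v ∈ RW (k * m), pw P v * (rv w₀ v : ℝ)
      = ∑ v ∈ RW (k * m), ∑ j : Fin m, (if BJ w₀ v j then pw P v else 0) := by
        refine Finset.sum_congr rfl fun v _ => ?_
        rw [hcast v, Finset.mul_sum]
        refine Finset.sum_congr rfl fun j _ => ?_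
        by_cases h : BJ w₀ v j <;> simp [h]
    _ = ∑ j : Fin m, ∑ v ∈ RW (k * m), (if BJ w₀ v j then pw P v else 0) := Finset.sum_comm
    _ = ∑ j : Fin m, ∑ v ∈ (RW (k * m)).filter (fun v => BJ w₀ v j), pw P v := by
        refine Finset.sum_congr rfl fun j _ => (Finset.sum_filter _ _).symm
    _ = ∑ j : Fin m, pw P w₀ := Finset.sum_congr rfl fun j _ => sumG P hinv w₀ j
    _ = m * pw P w₀ := by
        rw [Finset.sum_const, Finset.card_univ, Fintype.card_fin, nsmul_eq_mul]

lemma sum_pw_rvsq_ge (hinv : MeasurePreserving (shift : (ℕ → A) → (ℕ → A)) P P)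
    {k m : ℕ} (w₀ : Fin k → A) :
    ((m : ℝ) * pw P w₀) ^ 2 ≤ ∑ v ∈ RW (k * m), pw P v * ((rv w₀ v : ℝ)) ^ 2 := by
  have hCS := Finset.sum_mul_sq_le_sq_mul_sq (RW (k * m))
    (fun v => Real.sqrt (pw P v)) (fun v => Real.sqrt (pw P v) * (rv w₀ v : ℝ))
  have h1 : ∀ v : Fin (k * m) → A,
      Real.sqrt (pw P v) * (Real.sqrt (pw P v) * (rv w₀ v : ℝ)) = pw P v * (rv w₀ v : ℝ) := by
    intro v
    rw [← mul_assoc, Real.mul_self_sqrt (pw_nonneg P v)]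
  have h2 : ∀ v : Fin (k * m) → A, Real.sqrt (pw P v) ^ 2 = pw P v :=
    fun v => Real.sq_sqrt (pw_nonneg P v)
  have h3 : ∀ v : Fin (k * m) → A,
      (Real.sqrt (pw P v) * (rv w₀ v : ℝ)) ^ 2 = pw P v * ((rv w₀ v : ℝ)) ^ 2 := by
    intro v
    rw [mul_pow, h2 v]
  rw [Finset.sum_congr rfl (fun v _ => h1 v), Finset.sum_congr rfl (fun v _ => h2 v),
    Finset.sum_congr rfl (fun v _ => h3 v), sum_RW_pw P, one_mul, sum_pw_rv P hinv w₀] at hCS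
  exact hCS

/-! ## the flip injection -/

def alt {k : ℕ} (w₀ : Fin k → A) (i₀ : Fin k) : A → A :=
  fun a => if a = w₀ i₀ then rep (w₀ i₀) else w₀ i₀

lemma alt_ne {k : ℕ} (w₀ : Fin k → A) (i₀ : Fin k) (hi₀ : rep (w₀ i₀) ≠ w₀ i₀) (a : A) :
    alt w₀ i₀ a ≠ a := by
  rw [alt]
  by_cases h : a = w₀ i₀
  · rw [if_pos h, h]
    exact hi₀
  · rw [if_neg h]
    exact fun hc => h hc.symm

lemma rel_alt {k : ℕ} (w₀ : Fin k → A) (i₀ : Fin k) {a : A} (ha : rel (w₀ i₀) a) :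
    rel a (alt w₀ i₀ a) := by
  refine rel_trans (rel_symm ha) ?_
  rw [alt]
  by_cases h : a = w₀ i₀
  · rw [if_pos h]
    exact rel_rep _
  · rw [if_neg h]
    exact rel_refl _

def flip {k m : ℕ} (w₀ : Fin k → A) (i₀ : Fin k) (v : Fin (k * m) → A)
    (σ : Finset (Fin m)) : Fin (k * m) → A :=
  fun s => if ∃ j ∈ σ, s = idx j i₀ then alt w₀ i₀ (v s) else v s

lemma flip_rel {k m : ℕ} (w₀ : Fin k → A) (i₀ : Fin k) {v : Fin (k * m) → A}
    {σ : Finset (Fin m)} (hσ : ∀ j ∈ σ, BJ w₀ v j) (s : Fin (k * m)) :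
    rel (v s) (flip w₀ i₀ v σ s) := by
  rw [flip]
  by_cases h : ∃ j ∈ σ, s = idx j i₀
  · rw [if_pos h]
    rcases h with ⟨j, hj, rfl⟩
    exact rel_alt w₀ i₀ (hσ j hj i₀)
  · rw [if_neg h]
    exact rel_refl _

lemma flip_pw {k m : ℕ} (w₀ : Fin k → A) (i₀ : Fin k) {v : Fin (k * m) → A}
    {σ : Finset (Fin m)} (hσ : ∀ j ∈ σ, BJ w₀ v j) :
    pw P (flip w₀ i₀ v σ) = pw P v := by
  rw [pw, pw, MW_congr (flip_rel w₀ i₀ hσ)]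

lemma flip_rep {k m : ℕ} (w₀ : Fin k → A) (i₀ : Fin k) {v : Fin (k * m) → A}
    (hv : v ∈ RW (k * m)) {σ : Finset (Fin m)} (hσ : ∀ j ∈ σ, BJ w₀ v j) (s : Fin (k * m)) :
    rep (flip w₀ i₀ v σ s) = v s := by
  rw [← rep_eq_of_rel (flip_rel w₀ i₀ hσ s)]
  exact mem_RW.1 hv s

lemma flip_detect {k m : ℕ} (hk : 0 < k) (w₀ : Fin k → A) (i₀ : Fin k)
    (hi₀ : rep (w₀ i₀) ≠ w₀ i₀) (v : Fin (k * m) → A) (σ : Finset (Fin m)) (j : Fin m) :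
    flip w₀ i₀ v σ (idx j i₀) ≠ v (idx j i₀) ↔ j ∈ σ := by
  constructor
  · intro hne
    by_contra hj
    apply hne
    rw [flip, if_neg]
    rintro ⟨j', hj', hjj'⟩
    exact hj ((idx_inj hk hjj') ▸ hj')
  · intro hj
    rw [flip, if_pos ⟨j, hj, rfl⟩]
    exact alt_ne w₀ i₀ hi₀ _

lemma inj_sum {k m : ℕ} (hk : 0 < k) (w₀ : Fin k → A) (i₀ : Fin k)
    (hi₀ : rep (w₀ i₀) ≠ w₀ i₀) :
    ∑ v ∈ RW (k * m), (2 : ℝ) ^ (rv w₀ v) * pw P v ≤ ∑ w : Fin (k * m) → A, pw P w := by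
  classical
  set Fv : (Fin (k * m) → A) → Finset (Fin (k * m) → A) :=
    fun v => ((Finset.univ.filter (fun j : Fin m => BJ w₀ v j)).powerset).image
      (fun σ => flip w₀ i₀ v σ) with hFv
  have hσprop : ∀ v : Fin (k * m) → A, ∀ σ ∈ (Finset.univ.filter
      (fun j : Fin m => BJ w₀ v j)).powerset, ∀ j ∈ σ, BJ w₀ v j := by
    intro v σ hσ j hj
    exact (Finset.mem_filter.1 (Finset.mem_powerset.1 hσ hj)).2
  have hpw_eq : ∀ v : Fin (k * m) → A, ∀ w ∈ Fv v, pw P w = pw P v := by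
    intro v w hw
    rcases Finset.mem_image.1 hw with ⟨σ, hσ, rfl⟩
    exact flip_pw P w₀ i₀ (hσprop v σ hσ)
  have hcard : ∀ v : Fin (k * m) → A, (Fv v).card = 2 ^ (rv w₀ v) := by
    intro v
    rw [hFv]
    rw [Finset.card_image_of_injOn, Finset.card_powerset, rv]
    intro σ hσ σ' hσ' heq
    simp only at heq
    ext j
    rw [← flip_detect hk w₀ i₀ hi₀ v σ j, ← flip_detect hk w₀ i₀ hi₀ v σ' j, heq]
  have hdisj : ∀ v ∈ RW (k * m), ∀ v' ∈ RW (k * m), v ≠ v' → Disjoint (Fv v) (Fv v') := by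
    intro v hv v' hv' hne
    rw [Finset.disjoint_left]
    intro w hw hw'
    apply hne
    rcases Finset.mem_image.1 hw with ⟨σ, hσ, hflip⟩
    rcases Finset.mem_image.1 hw' with ⟨σ', hσ', hflip'⟩
    funext s
    rw [← flip_rep w₀ i₀ hv (hσprop v σ hσ) s, ← flip_rep w₀ i₀ hv' (hσprop v' σ' hσ') s,
      hflip, hflip']
  calc ∑ v ∈ RW (k * m), (2 : ℝ) ^ (rv w₀ v) * pw P v
      = ∑ v ∈ RW (k * m), ∑ w ∈ Fv v, pw P w := by
        refine Finset.sum_congr rfl fun v hv => ?_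
        rw [Finset.sum_congr rfl (hpw_eq v), Finset.sum_const, hcard v, nsmul_eq_mul]
        push_cast
        ring
    _ = ∑ w ∈ (RW (k * m)).biUnion Fv, pw P w :=
        (Finset.sum_biUnion hdisj).symm
    _ ≤ ∑ w : Fin (k * m) → A, pw P w :=
        Finset.sum_le_sum_of_subset_of_nonneg (Finset.subset_univ _)
          (fun w _ _ => pw_nonneg P w)

/-! ## the blow-up contradiction -/

lemma blowup (hinv : MeasurePreserving (shift : (ℕ → A) → (ℕ → A)) P P)
    {k : ℕ} {w₀ : Fin k → A} (hnr : ¬∀ i, rep (w₀ i) = w₀ i)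
    (h0 : P (MW w₀) ≠ 0) (h1 : P (MW w₀) ≠ 1) {hent : ℝ}
    (hlim : Tendsto (fun n : ℕ => Hn P n / n) atTop (nhds hent)) : False := by
  classical
  push_neg at hnr
  obtain ⟨i₀, hi₀⟩ := hnr
  have hk : 0 < k := i₀.pos
  set t : ℝ := pw P w₀ with htdef
  have ht0 : 0 < t := ENNReal.toReal_pos h0 (measure_ne_top P _)
  have ht1 : t < 1 := by
    have hlt : P (MW w₀) < 1 := lt_of_le_of_ne prob_le_one h1
    have := ENNReal.toReal_strict_mono ENNReal.one_ne_top hlt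
    simpa [htdef, pw] using this
  -- the maximal cylinder mass at level k
  set c : ℝ := (Finset.univ : Finset (Fin k → A)).sup' ⟨w₀, Finset.mem_univ w₀⟩ (pw P) with hcdef
  have hct : t ≤ c := Finset.le_sup' (pw P) (Finset.mem_univ w₀)
  have hc0 : 0 < c := lt_of_lt_of_le ht0 hct
  have hc1 : c < 1 := by
    rw [hcdef]
    apply (Finset.sup'_lt_iff _).2
    intro u _
    rcases MW_eq_or_disjoint u w₀ with heq | hdis
    · rw [pw, heq]
      exact ht1
    · have hsum : P (MW u) + P (MW w₀) ≤ 1 := by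
        rw [← measure_union hdis (measurableSet_MW w₀)]
        exact prob_le_one
      have h2 : pw P u + t ≤ 1 := by
        have h3 := ENNReal.toReal_mono ENNReal.one_ne_top hsum
        rwa [ENNReal.toReal_add (measure_ne_top P _) (measure_ne_top P _), ENNReal.toReal_one]
          at h3
      linarith
  set β : ℝ := -Real.log c with hβdef
  have hβ : 0 < β := by
    have := Real.log_neg hc0 hc1
    rw [hβdef]
    linarith
  -- lower bound for Hn at multiples of k
  have hHnlow : ∀ m : ℕ, 0 < m → β * ((m * t) ^ 2 / 2) ≤ Hn P (k * m) := by
    intro m hm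
    have hkm : k ≤ k * m := Nat.le_mul_of_pos_right k hm
    -- S := total mass of all atomic cylinders
    set S : ℝ := ∑ w : Fin (k * m) → A, pw P w with hSdef
    have hS_ge : (m * t) ^ 2 / 2 ≤ S := by
      have hstep1 : ∑ v ∈ RW (k * m), (1 + (rv w₀ v : ℝ)
          + ((rv w₀ v : ℝ) ^ 2 - (rv w₀ v : ℝ)) / 2) * pw P v
          ≤ ∑ v ∈ RW (k * m), (2 : ℝ) ^ (rv w₀ v) * pw P v := by
        refine Finset.sum_le_sum fun v _ => ?_
        exact mul_le_mul_of_nonneg_right (one_add_cast_le_two_pow (rv w₀ v)) (pw_nonneg P v)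
      have hexpand : ∑ v ∈ RW (k * m), (1 + (rv w₀ v : ℝ)
          + ((rv w₀ v : ℝ) ^ 2 - (rv w₀ v : ℝ)) / 2) * pw P v
          = (∑ v ∈ RW (k * m), pw P v) + (∑ v ∈ RW (k * m), pw P v * (rv w₀ v : ℝ))
            + ((∑ v ∈ RW (k * m), pw P v * ((rv w₀ v : ℝ)) ^ 2)
              - (∑ v ∈ RW (k * m), pw P v * (rv w₀ v : ℝ))) / 2 := by
        have hper : ∀ v ∈ RW (k * m), (1 + (rv w₀ v : ℝ)
            + ((rv w₀ v : ℝ) ^ 2 - (rv w₀ v : ℝ)) / 2) * pw P v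
            = pw P v + pw P v * (rv w₀ v : ℝ)
              + (pw P v * ((rv w₀ v : ℝ)) ^ 2 - pw P v * (rv w₀ v : ℝ)) / 2 := by
          intro v _
          ring
        rw [Finset.sum_congr rfl hper, Finset.sum_add_distrib, Finset.sum_add_distrib,
          ← Finset.sum_div, Finset.sum_sub_distrib]
      have hE1 := sum_pw_rv P hinv (m := m) w₀
      have hE2 := sum_pw_rvsq_ge P hinv (m := m) w₀
      have hE0 := sum_RW_pw P (k * m)
      have hfin : (m * t) ^ 2 / 2 ≤ ∑ v ∈ RW (k * m), (2 : ℝ) ^ (rv w₀ v) * pw P v := by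
        refine le_trans ?_ hstep1
        rw [hexpand, hE0, hE1]
        have hmt : 0 ≤ (m : ℝ) * t := mul_nonneg (Nat.cast_nonneg m) ht0.le
        linarith [hE2]
      refine hfin.trans ?_
      exact inj_sum P hk w₀ i₀ hi₀
    have hHnS : β * S ≤ Hn P (k * m) := by
      rw [Hn_eq_sum_pw, hSdef, Finset.mul_sum]
      refine Finset.sum_le_sum fun w _ => ?_
      have hwc : pw P w ≤ c := by
        refine le_trans (pw_mono P hkm w) ?_
        exact Finset.le_sup' (pw P) (Finset.mem_univ _)
      have := negMulLog_ge (pw_nonneg P w) hc0 hwc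
      rw [hβdef]
      linarith [this]
    calc β * ((m * t) ^ 2 / 2) ≤ β * S := by
          exact mul_le_mul_of_nonneg_left hS_ge hβ.le
      _ ≤ Hn P (k * m) := hHnS
  -- eventually bound from hlim
  have hev : ∀ᶠ n : ℕ in atTop, Hn P n / n ≤ hent + 1 := by
    have : ∀ᶠ z in nhds hent, z ≤ hent + 1 :=
      eventually_le_nhds (lt_add_one hent)
    exact hlim.eventually this
  obtain ⟨N, hN⟩ := Filter.eventually_atTop.1 hev
  -- choose m large
  obtain ⟨M, hM⟩ := exists_nat_gt (max (N : ℝ) (2 * k * (|hent| + 1) / (β * t ^ 2)))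
  set m : ℕ := M + 1 with hmdef
  have hm0 : 0 < m := Nat.succ_pos M
  have hmN : N ≤ k * m := by
    have h1 : (N : ℝ) < M := lt_of_le_of_lt (le_max_left _ _) hM
    have h2 : N ≤ M := by exact_mod_cast h1.le
    calc N ≤ M + 1 := by omega
      _ = 1 * m := (one_mul m).symm
      _ ≤ k * m := Nat.mul_le_mul_right m hk
  have hmbig : 2 * k * (|hent| + 1) / (β * t ^ 2) < m := by
    have h1 := lt_of_le_of_lt (le_max_right ((N : ℝ)) _) hM
    have h2 : (M : ℝ) ≤ m := by rw [hmdef]; push_cast; linarith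
    linarith
  -- contradiction
  have hub := hN (k * m) hmN
  have hkm_pos : (0 : ℝ) < ((k * m : ℕ) : ℝ) := by
    have : 0 < k * m := Nat.mul_pos hk hm0
    exact_mod_cast this
  have hub2 : Hn P (k * m) ≤ (hent + 1) * ((k * m : ℕ) : ℝ) := by
    rw [div_le_iff₀ hkm_pos] at hub
    exact hub
  have hlow := hHnlow m hm0
  have hβt2 : 0 < β * t ^ 2 := by positivity
  have hkey : (hent + 1) * ((k * m : ℕ) : ℝ) < β * ((m * t) ^ 2 / 2) := by
    have hcast : ((k * m : ℕ) : ℝ) = (k : ℝ) * m := by push_cast; ring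
    rw [hcast]
    have hm1 : (1 : ℝ) ≤ (m : ℝ) := by exact_mod_cast hm0
    have habs : hent + 1 ≤ |hent| + 1 := by
      have := le_abs_self hent
      linarith
    have hstep : 2 * (k : ℝ) * (|hent| + 1) < β * t ^ 2 * m := by
      have := (div_lt_iff₀ hβt2).1 hmbig
      linarith
    -- β * (m*t)^2/2 = (β * t^2 * m) * m / 2 > 2k(|hent|+1) * m / 2 = k(|hent|+1)m
    have hkpos : (0 : ℝ) < (k : ℝ) := by exact_mod_cast hk
    nlinarith [mul_le_mul_of_nonneg_right habs (mul_nonneg hkpos.le (by linarith : (0:ℝ) ≤ (m:ℝ))),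
      mul_lt_mul_of_pos_right hstep (lt_of_lt_of_le one_pos hm1), sq_nonneg ((m : ℝ) * t)]
  linarith

end SMBaux

theorem stmt3 [Fintype A] (P : Measure (ℕ → A)) [IsProbabilityMeasure P]
    (hinv : MeasurePreserving (shift : (ℕ → A) → (ℕ → A)) P P)
    (ZL : (ℕ → A) → ℝ)
    (hZL : ∀ᵐ x ∂P, Tendsto (fun n : ℕ => Zf P (n + 1) x) atTop (nhds (ZL x)))
    (hent : ℝ)
    (hlim : Tendsto (fun n : ℕ => Hn P n / n) atTop (nhds hent)) :
    ∫ x, Real.log (ZL x) ∂P = hent := by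
  classical
  obtain ⟨hbar, hcesaro, hint⟩ := SMBaux.main_analysis P hinv ZL hZL
  by_cases hdicho : ∀ (n : ℕ) (w : Fin n → A),
      (∀ i, SMBaux.rep (w i) = w i) ∨ P (SMBaux.MW w) = 0 ∨ P (SMBaux.MW w) = 1
  · have heq : ∀ n, Hn P n = SMBaux.Hbar P n := SMBaux.Hn_eq_Hbar_of P hdicho
    have htd : Tendsto (fun n : ℕ => Hn P n / n) atTop (nhds hbar) :=
      hcesaro.congr fun n => by rw [heq n]
    rw [hint]
    exact (tendsto_nhds_unique hlim htd).symm
  · push_neg at hdicho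
    obtain ⟨n, w, hnr, h0, h1⟩ := hdicho
    exact (SMBaux.blowup P hinv (by push_neg; exact hnr) h0 h1 hlim).elim
end
end

section
/- Let ψ_{m,M} := sup_{k≥m} |log Z_k − log Z_M|. Then lim_{M→∞} lim_{m→∞} lim_{N→∞} E_P[(1/N) Σ_{k=0}^{N−1} ψ_{m,M}(T^k ·)] = 0; in fact each inner limit equals E_P(ψ_{m,M}) by shift-invariance, lim_{m→∞} E_P(ψ_{m,M}) = E_P(|log Z − log Z_M|) by monotone convergence, and this tends to 0 as M → ∞. -/
open MeasureTheory Filter Finset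

noncomputable section

variable {A : Type*}

variable [MeasurableSpace A]

/-- `log Z_max = sup_{n ≥ 1} log Z_n` -/
def ZmaxLog (P : Measure (ℕ → A)) (x : ℕ → A) : ℝ :=
  ⨆ n : ℕ, Real.log (Zf P (n + 1) x)

/-- `ψ_{m,M} = sup_{k ≥ m} |log Z_k − log Z_M|` -/
def psi (P : Measure (ℕ → A)) (m M : ℕ) (x : ℕ → A) : ℝ :=
  ⨆ k : {k : ℕ // m ≤ k}, |Real.log (Zf P k.val x) - Real.log (Zf P M x)|

set_option linter.unusedSectionVars false

namespace Stmt9Aux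

open Set

lemma measurable_shift : Measurable (shift : (ℕ → A) → (ℕ → A)) :=
  measurable_pi_lambda _ fun i => measurable_pi_apply (i + 1)

/-- the atom of the σ-algebra on `A` containing `a` -/
def atomS (a : A) : Set A := ⋂₀ {S : Set A | MeasurableSet S ∧ a ∈ S}

lemma mem_atomS_self (a : A) : a ∈ atomS a := fun _ hS => hS.2

lemma atomS_subset {a : A} {S : Set A} (hS : MeasurableSet S) (ha : a ∈ S) : atomS a ⊆ S :=
  Set.sInter_subset_of_mem ⟨hS, ha⟩

lemma measurableSet_atomS [Finite A] (a : A) : MeasurableSet (atomS a) := by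
  have : Finite (Set A) := inferInstance
  exact MeasurableSet.sInter (Set.to_countable _) (fun S hS => hS.1)

lemma atomS_symm [Finite A] {a b : A} (h : a ∈ atomS b) : b ∈ atomS a := by
  by_contra hb
  rw [atomS, Set.mem_sInter] at hb
  push_neg at hb
  obtain ⟨S, ⟨hSm, haS⟩, hbS⟩ := hb
  exact (atomS_subset hSm.compl hbS h) haS

lemma atomS_eq [Finite A] {a b : A} (h : a ∈ atomS b) : atomS a = atomS b :=
  subset_antisymm (atomS_subset (measurableSet_atomS b) h)
    (atomS_subset (measurableSet_atomS a) (atomS_symm h))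

def satCyl (x : ℕ → A) (n : ℕ) : Set (ℕ → A) := {y | ∀ i < n, y i ∈ atomS (x i)}

lemma measurableSet_satCyl [Finite A] (x : ℕ → A) (n : ℕ) : MeasurableSet (satCyl x n) := by
  have : satCyl x n = ⋂ i ∈ Finset.range n, (fun y : ℕ → A => y i) ⁻¹' atomS (x i) := by
    ext y; simp [satCyl]
  rw [this]
  exact (Finset.range n).measurableSet_biInter fun i _ =>
    (measurable_pi_apply i) (measurableSet_atomS (x i))

/-- every measurable set in the product σ-algebra is saturated w.r.t. coordinatewise atoms -/
lemma sat_of_measurableSet [Finite A] {U : Set (ℕ → A)} (hU : MeasurableSet U) :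
    ∀ ⦃y z : ℕ → A⦄, z ∈ U → (∀ i, y i ∈ atomS (z i)) → y ∈ U := by
  let m' : MeasurableSpace (ℕ → A) :=
    { MeasurableSet' := fun U => ∀ ⦃y z : ℕ → A⦄, z ∈ U → (∀ i, y i ∈ atomS (z i)) → y ∈ U
      measurableSet_empty := fun _ _ h _ => h.elim
      measurableSet_compl := fun U hU y z hz hyz hyU =>
        hz (hU hyU (fun i => atomS_symm (hyz i)))
      measurableSet_iUnion := by
        intro f hf y z hz hyz
        obtain ⟨i, hi⟩ := Set.mem_iUnion.mp hz
        exact Set.mem_iUnion.mpr ⟨i, hf i hi hyz⟩ }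
  have hle : (MeasurableSpace.pi : MeasurableSpace (ℕ → A)) ≤ m' := by
    apply iSup_le
    intro i
    rw [MeasurableSpace.comap_le_iff_le_map]
    intro S hS
    intro y z hz hyz
    exact atomS_subset hS hz (hyz i)
  exact hle U hU

lemma measure_cyl_eq [Finite A] (P : Measure (ℕ → A)) (x : ℕ → A) (n : ℕ) :
    P (cyl x n) = P (satCyl x n) := by
  classical
  refine le_antisymm (measure_mono fun y hy i hi => ?_) ?_
  · rw [hy i hi]; exact mem_atomS_self (x i)
  · rw [measure_eq_iInf (cyl x n)]
    refine le_iInf fun t => le_iInf fun hsub => le_iInf fun ht => measure_mono fun y hy => ?_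
    have hz : (fun i => if i < n then x i else y i) ∈ cyl x n := by
      intro i hi; simp [hi]
    refine sat_of_measurableSet ht (hsub hz) fun i => ?_
    by_cases hi : i < n
    · simpa [hi] using hy i hi
    · simpa [hi] using mem_atomS_self (y i)

lemma satCyl_congr [Finite A] {x x' : ℕ → A} {n : ℕ} (h : ∀ i < n, x' i ∈ atomS (x i)) :
    satCyl x' n = satCyl x n := by
  ext y
  constructor <;> intro hy i hi
  · rw [← atomS_eq (h i hi)]; exact hy i hi
  · rw [atomS_eq (h i hi)]; exact hy i hi

lemma satCyl_eq_or_disjoint [Finite A] (x x' : ℕ → A) (n : ℕ) :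
    satCyl x n = satCyl x' n ∨ Disjoint (satCyl x n) (satCyl x' n) := by
  by_cases h : (satCyl x n ∩ satCyl x' n).Nonempty
  · obtain ⟨z, hz1, hz2⟩ := h
    left
    rw [← satCyl_congr (x := x) (x' := z) hz1, satCyl_congr (x := x') (x' := z) hz2]
  · right
    rw [Set.not_nonempty_iff_eq_empty] at h
    exact Set.disjoint_iff_inter_eq_empty.mpr h

variable [Nonempty A]

/-- extend a finite word to an infinite sequence -/
def extW {n : ℕ} (w : Fin n → A) : ℕ → A :=
  fun i => if h : i < n then w ⟨i, h⟩ else Classical.arbitrary A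

lemma extW_lt {n : ℕ} (w : Fin n → A) {i : ℕ} (h : i < n) : extW w i = w ⟨i, h⟩ := dif_pos h

lemma satCyl_extW_restrict [Finite A] (x : ℕ → A) (n : ℕ) :
    satCyl (extW (fun i : Fin n => x i)) n = satCyl x n := by
  apply satCyl_congr
  intro i hi
  rw [extW_lt _ hi]
  exact mem_atomS_self (x i)

lemma mem_satCyl_extW_restrict (x : ℕ → A) (n : ℕ) :
    x ∈ satCyl (extW (fun i : Fin n => x i)) n := by
  intro i hi
  rw [extW_lt _ hi]
  exact mem_atomS_self (x i)

lemma measurable_measure_satCyl [Fintype A] (P : Measure (ℕ → A)) (n : ℕ) :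
    Measurable fun x => P (satCyl x n) := by
  classical
  intro B hB
  have : (fun x => P (satCyl x n)) ⁻¹' B =
      ⋃ w ∈ Finset.univ.filter (fun w : Fin n → A => P (satCyl (extW w) n) ∈ B),
        satCyl (extW w) n := by
    ext x
    simp only [Set.mem_preimage, Set.mem_iUnion, Finset.mem_filter, Finset.mem_univ, true_and]
    constructor
    · intro hx
      refine ⟨fun i : Fin n => x i, ?_, mem_satCyl_extW_restrict x n⟩
      rwa [satCyl_extW_restrict]
    · rintro ⟨w, hwB, hxw⟩
      have : satCyl x n = satCyl (extW w) n := satCyl_congr hxw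
      rwa [this]
  rw [this]
  exact (Finset.univ.filter _).measurableSet_biUnion fun w _ => measurableSet_satCyl _ _

lemma Zf_eq [Fintype A] (P : Measure (ℕ → A)) (n : ℕ) (x : ℕ → A) :
    Zf P n x = (P (satCyl (shift x) (n - 1))).toReal / (P (satCyl x n)).toReal := by
  rw [Zf, measure_cyl_eq, measure_cyl_eq]

lemma measurable_Zf [Fintype A] (P : Measure (ℕ → A)) (n : ℕ) : Measurable (Zf P n) := by
  have : Zf P n = fun x =>
      (P (satCyl (shift x) (n - 1))).toReal / (P (satCyl x n)).toReal :=
    funext (Zf_eq P n)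
  rw [this]
  exact (((measurable_measure_satCyl P (n - 1)).comp measurable_shift).ennreal_toReal).div
    ((measurable_measure_satCyl P n).ennreal_toReal)

end Stmt9Aux


section Chunk2
open MeasureTheory Filter Set Stmt9Aux

variable {A : Type*} [MeasurableSpace A]

namespace Stmt9Aux

lemma satCyl_subset_shift (x : ℕ → A) (n : ℕ) :
    satCyl x n ⊆ shift ⁻¹' satCyl (shift x) (n - 1) := by
  intro y hy i hi
  exact hy (i + 1) (by omega)

lemma measure_satCyl_le_shift [Finite A] {P : Measure (ℕ → A)}
    (hinv : MeasurePreserving (shift : (ℕ → A) → (ℕ → A)) P P) (x : ℕ → A) (n : ℕ) :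
    P (satCyl x n) ≤ P (satCyl (shift x) (n - 1)) := by
  calc P (satCyl x n) ≤ P (shift ⁻¹' satCyl (shift x) (n - 1)) :=
        measure_mono (satCyl_subset_shift x n)
    _ = P (satCyl (shift x) (n - 1)) := hinv.measure_preimage (measurableSet_satCyl _ _).nullMeasurableSet

lemma ae_pos [Fintype A] [Nonempty A] (P : Measure (ℕ → A)) :
    ∀ᵐ x ∂P, ∀ n, 0 < P (satCyl x n) := by
  classical
  rw [ae_all_iff]
  intro n
  have hsub : {x | ¬ 0 < P (satCyl x n)} ⊆
      ⋃ w ∈ Finset.univ.filter (fun w : Fin n → A => P (satCyl (extW w) n) = 0),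
        satCyl (extW w) n := by
    intro x hx
    simp only [Set.mem_setOf_eq, not_lt, le_zero_iff] at hx
    simp only [Set.mem_iUnion, Finset.mem_filter, Finset.mem_univ, true_and]
    refine ⟨fun i : Fin n => x i, ?_, mem_satCyl_extW_restrict x n⟩
    rwa [satCyl_extW_restrict]
  have h0 : P (⋃ w ∈ Finset.univ.filter (fun w : Fin n → A => P (satCyl (extW w) n) = 0),
      satCyl (extW w) n) = 0 := by
    refine measure_biUnion_null_iff ?_ |>.mpr ?_
    · exact (Finset.univ.filter _).countable_toSet
    · intro w hw
      exact (Finset.mem_filter.mp hw).2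
  rw [ae_iff]
  exact measure_mono_null hsub h0

lemma one_le_Zf [Fintype A] [Nonempty A] {P : Measure (ℕ → A)} [IsProbabilityMeasure P]
    (hinv : MeasurePreserving (shift : (ℕ → A) → (ℕ → A)) P P) {x : ℕ → A}
    (hx : ∀ n, 0 < P (satCyl x n)) (n : ℕ) : 1 ≤ Zf P n x := by
  rw [Zf_eq]
  rw [le_div_iff₀ (ENNReal.toReal_pos (hx n).ne' (measure_ne_top P _))]
  rw [one_mul]
  exact ENNReal.toReal_le_toReal (measure_ne_top P _) (measure_ne_top P _) |>.mpr
    (measure_satCyl_le_shift hinv x n)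

end Stmt9Aux
end Chunk2

section Chunk3
open MeasureTheory Filter Set Stmt9Aux
open scoped ENNReal NNReal Classical

variable {A : Type*} [MeasurableSpace A]

namespace Stmt9Aux

def consA (a : A) (y : ℕ → A) : ℕ → A := fun i => Nat.casesOn i a y

@[simp] lemma consA_zero (a : A) (y : ℕ → A) : consA a y 0 = a := rfl
@[simp] lemma consA_succ (a : A) (y : ℕ → A) (i : ℕ) : consA a y (i + 1) = y i := rfl

lemma consA_shift (x : ℕ → A) : consA (x 0) (shift x) = x := by
  funext i; cases i <;> rfl

variable [Fintype A] [Nonempty A]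

def crossP (P : Measure (ℕ → A)) (ε : ℝ≥0∞) (a : A) (n : ℕ) (y : ℕ → A) : Prop :=
  P (satCyl (consA a y) n) < ε * P (satCyl y (n - 1))

def Tset (P : Measure (ℕ → A)) (ε : ℝ≥0∞) (a : A) (n : ℕ) : Set (ℕ → A) :=
  {y | crossP P ε a n y ∧ ∀ k, 1 ≤ k → k < n → ¬ crossP P ε a k y}

lemma crossP_congr (P : Measure (ℕ → A)) {ε : ℝ≥0∞} {a : A} {y y' : ℕ → A} {k n : ℕ}
    (hk : k ≤ n) (h : ∀ i < n - 1, y' i ∈ atomS (y i)) :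
    crossP P ε a k y' ↔ crossP P ε a k y := by
  have h1 : satCyl (consA a y') k = satCyl (consA a y) k := by
    apply satCyl_congr
    intro j hj
    cases j with
    | zero => exact mem_atomS_self a
    | succ i => exact h i (by omega)
  have h2 : satCyl y' (k - 1) = satCyl y (k - 1) := by
    apply satCyl_congr
    intro i hi
    exact h i (by omega)
  unfold crossP
  rw [h1, h2]

lemma Tset_mem_congr (P : Measure (ℕ → A)) {ε : ℝ≥0∞} {a : A} {n : ℕ} {y y' : ℕ → A}
    (h : ∀ i < n - 1, y' i ∈ atomS (y i)) :
    y' ∈ Tset P ε a n ↔ y ∈ Tset P ε a n := by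
  unfold Tset
  simp only [Set.mem_setOf_eq]
  constructor
  · rintro ⟨hc, hmin⟩
    exact ⟨(crossP_congr P le_rfl h).mp hc, fun k hk1 hkn hck =>
      hmin k hk1 hkn ((crossP_congr P (le_of_lt hkn) h).mpr hck)⟩
  · rintro ⟨hc, hmin⟩
    exact ⟨(crossP_congr P le_rfl h).mpr hc, fun k hk1 hkn hck =>
      hmin k hk1 hkn ((crossP_congr P (le_of_lt hkn) h).mp hck)⟩

lemma Tset_eq (P : Measure (ℕ → A)) (ε : ℝ≥0∞) (a : A) (n : ℕ) :
    Tset P ε a n = ⋃ w ∈ Finset.univ.filter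
      (fun w : Fin (n - 1) → A => extW w ∈ Tset P ε a n), satCyl (extW w) (n - 1) := by
  classical
  ext y
  simp only [Set.mem_iUnion, Finset.mem_filter, Finset.mem_univ, true_and, exists_prop]
  constructor
  · intro hy
    refine ⟨fun i : Fin (n - 1) => y i, ?_, mem_satCyl_extW_restrict y (n - 1)⟩
    refine (Tset_mem_congr P ?_).mpr hy
    intro i hi
    rw [extW_lt _ hi]
    exact mem_atomS_self (y i)
  · rintro ⟨w, hw, hyw⟩
    exact (Tset_mem_congr P (fun i hi => hyw i hi)).mpr hw

lemma measurableSet_Tset (P : Measure (ℕ → A)) (ε : ℝ≥0∞) (a : A) (n : ℕ) :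
    MeasurableSet (Tset P ε a n) := by
  rw [Tset_eq]
  exact Finset.measurableSet_biUnion _ fun w _ => measurableSet_satCyl _ _

lemma Tset_disjoint (P : Measure (ℕ → A)) (ε : ℝ≥0∞) (a : A) {n m : ℕ}
    (h1 : 1 ≤ n) (h1' : 1 ≤ m) (hnm : n ≠ m) :
    Disjoint (Tset P ε a n) (Tset P ε a m) := by
  rw [Set.disjoint_iff_inter_eq_empty]
  ext y
  simp only [Set.mem_inter_iff, Set.mem_empty_iff_false, iff_false, not_and]
  intro hyn hym
  rcases lt_or_gt_of_ne hnm with h | h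
  · exact hym.2 n h1 h hyn.1
  · exact hyn.2 m h1' h hym.1

/-- the key one-step estimate -/
lemma chung_step (P : Measure (ℕ → A)) [IsProbabilityMeasure P] (ε : ℝ≥0∞) (a : A) (n : ℕ)
    (hn : 1 ≤ n) :
    P {x | x 0 ∈ atomS a ∧ shift x ∈ Tset P ε a n} ≤ ε * P (Tset P ε a n) := by
  classical
  set F : Finset (Fin (n - 1) → A) :=
    Finset.univ.filter (fun w : Fin (n - 1) → A => extW w ∈ Tset P ε a n) with hF
  set C : Finset (Set (ℕ → A)) := F.image (fun w => satCyl (extW w) (n - 1)) with hC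
  have hTC : Tset P ε a n = ⋃ S ∈ C, S := by
    rw [Tset_eq P ε a n, hC]
    ext y
    simp only [hF, Set.mem_iUnion, Finset.mem_image, exists_prop, Finset.mem_filter,
      Finset.mem_univ, true_and]
    constructor
    · rintro ⟨w, hw, hyw⟩; exact ⟨_, ⟨w, hw, rfl⟩, hyw⟩
    · rintro ⟨S, ⟨w, hw, rfl⟩, hyS⟩; exact ⟨w, hw, hyS⟩
  have hmem : ∀ S ∈ C, ∃ w : Fin (n - 1) → A,
      extW w ∈ Tset P ε a n ∧ S = satCyl (extW w) (n - 1) := by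
    intro S hS
    rw [hC] at hS
    obtain ⟨w, hw, rfl⟩ := Finset.mem_image.mp hS
    exact ⟨w, (Finset.mem_filter.mp hw).2, rfl⟩
  have hdisj : (C : Set (Set (ℕ → A))).PairwiseDisjoint (fun S => S) := by
    intro S hS S' hS' hne
    obtain ⟨w, _, rfl⟩ := hmem S hS
    obtain ⟨w', _, rfl⟩ := hmem S' hS'
    rcases satCyl_eq_or_disjoint (extW w) (extW w') (n - 1) with h | h
    · exact absurd h hne
    · exact h
  have hmeas : ∀ S ∈ C, MeasurableSet S := by
    intro S hS
    obtain ⟨w, _, rfl⟩ := hmem S hS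
    exact measurableSet_satCyl _ _
  have hEV : {x : ℕ → A | x 0 ∈ atomS a ∧ shift x ∈ Tset P ε a n} =
      ⋃ S ∈ C, {x : ℕ → A | x 0 ∈ atomS a ∧ shift x ∈ S} := by
    rw [hTC]
    ext x
    simp only [Set.mem_setOf_eq, Set.mem_iUnion, exists_prop]
    constructor
    · rintro ⟨h0, S, hS, hxS⟩; exact ⟨S, hS, h0, hxS⟩
    · rintro ⟨S, hS, h0, hxS⟩; exact ⟨h0, S, hS, hxS⟩
  have hpiece : ∀ S ∈ C, P {x : ℕ → A | x 0 ∈ atomS a ∧ shift x ∈ S} ≤ ε * P S := by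
    intro S hS
    obtain ⟨w, hw, rfl⟩ := hmem S hS
    have hset : {x : ℕ → A | x 0 ∈ atomS a ∧ shift x ∈ satCyl (extW w) (n - 1)} =
        satCyl (consA a (extW w)) n := by
      ext x
      simp only [Set.mem_setOf_eq, satCyl, shift]
      constructor
      · rintro ⟨h0, hs⟩ j hj
        cases j with
        | zero => exact h0
        | succ i => exact hs i (by omega)
      · intro h
        exact ⟨h 0 (by omega), fun i hi => h (i + 1) (by omega)⟩
    rw [hset]
    exact le_of_lt hw.1
  calc P {x : ℕ → A | x 0 ∈ atomS a ∧ shift x ∈ Tset P ε a n}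
      ≤ ∑ S ∈ C, P {x : ℕ → A | x 0 ∈ atomS a ∧ shift x ∈ S} := by
        rw [hEV]; exact measure_biUnion_finset_le C _
    _ ≤ ∑ S ∈ C, ε * P S := Finset.sum_le_sum hpiece
    _ = ε * ∑ S ∈ C, P S := by rw [Finset.mul_sum]
    _ = ε * P (⋃ S ∈ C, S) := by rw [measure_biUnion_finset hdisj hmeas]
    _ = ε * P (Tset P ε a n) := by rw [← hTC]

theorem chung (P : Measure (ℕ → A)) [IsProbabilityMeasure P]
    (hinv : MeasurePreserving (shift : (ℕ → A) → (ℕ → A)) P P) (ε : ℝ≥0∞) :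
    P {x | ∃ n, 1 ≤ n ∧ P (satCyl x n) < ε * P (satCyl (shift x) (n - 1))} ≤
      (Fintype.card A : ℝ≥0∞) * ε := by
  classical
  have hsub : {x : ℕ → A | ∃ n, 1 ≤ n ∧ P (satCyl x n) < ε * P (satCyl (shift x) (n - 1))} ⊆
      ⋃ a : A, ⋃ n : ℕ, {x : ℕ → A | x 0 ∈ atomS a ∧ shift x ∈ Tset P ε a (n + 1)} := by
    intro x hx
    obtain ⟨n, hn, hcross⟩ := hx
    have hex : ∃ k, 1 ≤ k ∧ crossP P ε (x 0) k (shift x) := by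
      refine ⟨n, hn, ?_⟩
      unfold crossP
      rwa [consA_shift]
    set n₀ := Nat.find hex with hn₀def
    have hspec := Nat.find_spec hex
    have hmin : ∀ k, 1 ≤ k → k < n₀ → ¬ crossP P ε (x 0) k (shift x) := by
      intro k hk1 hkn hc
      exact Nat.find_min hex hkn ⟨hk1, hc⟩
    have hT : shift x ∈ Tset P ε (x 0) n₀ := ⟨hspec.2, hmin⟩
    refine Set.mem_iUnion.mpr ⟨x 0, Set.mem_iUnion.mpr ⟨n₀ - 1, ?_⟩⟩
    have heq : n₀ - 1 + 1 = n₀ := by omega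
    rw [heq]
    exact ⟨mem_atomS_self _, hT⟩
  have hA : ∀ a : A, P (⋃ n : ℕ, {x : ℕ → A | x 0 ∈ atomS a ∧ shift x ∈ Tset P ε a (n + 1)}) ≤ ε := by
    intro a
    have hdisjT : Pairwise (Function.onFun Disjoint fun n : ℕ => Tset P ε a (n + 1)) := by
      intro n m hnm
      exact Tset_disjoint P ε a (by omega) (by omega) (by omega)
    calc P (⋃ n : ℕ, {x : ℕ → A | x 0 ∈ atomS a ∧ shift x ∈ Tset P ε a (n + 1)})
        ≤ ∑' n : ℕ, P {x : ℕ → A | x 0 ∈ atomS a ∧ shift x ∈ Tset P ε a (n + 1)} :=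
          measure_iUnion_le _
      _ ≤ ∑' n : ℕ, ε * P (Tset P ε a (n + 1)) :=
          ENNReal.tsum_le_tsum fun n => chung_step P ε a (n + 1) (by omega)
      _ = ε * ∑' n : ℕ, P (Tset P ε a (n + 1)) := ENNReal.tsum_mul_left
      _ = ε * P (⋃ n : ℕ, Tset P ε a (n + 1)) := by
          rw [measure_iUnion hdisjT fun n => measurableSet_Tset P ε a (n + 1)]
      _ ≤ ε * 1 := mul_le_mul_right prob_le_one ε
      _ = ε := mul_one ε
  calc P {x : ℕ → A | ∃ n, 1 ≤ n ∧ P (satCyl x n) < ε * P (satCyl (shift x) (n - 1))}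
      ≤ P (⋃ a : A, ⋃ n : ℕ, {x : ℕ → A | x 0 ∈ atomS a ∧ shift x ∈ Tset P ε a (n + 1)}) :=
        measure_mono hsub
    _ ≤ ∑' a : A, P (⋃ n : ℕ, {x : ℕ → A | x 0 ∈ atomS a ∧ shift x ∈ Tset P ε a (n + 1)}) :=
        measure_iUnion_le _
    _ ≤ ∑' _a : A, ε := ENNReal.tsum_le_tsum hA
    _ = (Fintype.card A : ℝ≥0∞) * ε := by
        rw [tsum_fintype]
        simp [Finset.sum_const, nsmul_eq_mul]

end Stmt9Aux
end Chunk3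

section Chunk4
open MeasureTheory Filter Set Real Stmt9Aux
open scoped ENNReal Classical

variable {A : Type*} [MeasurableSpace A] [Fintype A] [Nonempty A]

namespace Stmt9Aux

lemma measurable_ZmaxLog (P : Measure (ℕ → A)) : Measurable (ZmaxLog P) := by
  unfold ZmaxLog
  exact Measurable.iSup fun n => Real.measurable_log.comp (measurable_Zf P (n + 1))

lemma tail_bound (P : Measure (ℕ → A)) [IsProbabilityMeasure P]
    (hinv : MeasurePreserving (shift : (ℕ → A) → (ℕ → A)) P P) (t : ℝ) :
    P {x | t < ZmaxLog P x} ≤ ENNReal.ofReal (Fintype.card A * Real.exp (-t)) := by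
  set ε := ENNReal.ofReal (Real.exp (-t)) with hε
  set E := {x : ℕ → A | ∃ n, 1 ≤ n ∧ P (satCyl x n) < ε * P (satCyl (shift x) (n - 1))} with hE
  have hsub : {x | t < ZmaxLog P x} ∩ {x | ∀ n, 0 < P (satCyl x n)} ⊆ E := by
    rintro x ⟨hxt, hxpos⟩
    simp only [Set.mem_setOf_eq] at hxt
    unfold ZmaxLog at hxt
    obtain ⟨n, hn⟩ := exists_lt_of_lt_ciSup hxt
    have hden : 0 < P (satCyl x (n + 1)) := hxpos (n + 1)
    have hnum_ge : P (satCyl x (n + 1)) ≤ P (satCyl (shift x) n) := by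
      simpa using measure_satCyl_le_shift hinv x (n + 1)
    have hdenR : 0 < (P (satCyl x (n + 1))).toReal :=
      ENNReal.toReal_pos hden.ne' (measure_ne_top P _)
    have hnumR : 0 < (P (satCyl (shift x) n)).toReal :=
      lt_of_lt_of_le hdenR
        ((ENNReal.toReal_le_toReal (measure_ne_top P _) (measure_ne_top P _)).mpr hnum_ge)
    have hzf : Zf P (n + 1) x =
        (P (satCyl (shift x) n)).toReal / (P (satCyl x (n + 1))).toReal := by
      rw [Zf_eq]; simp
    have hz : 0 < Zf P (n + 1) x := by rw [hzf]; exact div_pos hnumR hdenR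
    have hexp : Real.exp t < Zf P (n + 1) x := (Real.lt_log_iff_exp_lt hz).mp hn
    rw [hzf] at hexp
    have h2 : Real.exp t * (P (satCyl x (n + 1))).toReal < (P (satCyl (shift x) n)).toReal :=
      (lt_div_iff₀ hdenR).mp hexp
    have h1 : (P (satCyl x (n + 1))).toReal < Real.exp (-t) * (P (satCyl (shift x) n)).toReal := by
      rw [Real.exp_neg, inv_mul_eq_div, lt_div_iff₀ (Real.exp_pos t)]
      nlinarith [h2]
    refine ⟨n + 1, by omega, ?_⟩
    simp only [Nat.add_sub_cancel]
    calc P (satCyl x (n + 1))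
        = ENNReal.ofReal ((P (satCyl x (n + 1))).toReal) :=
          (ENNReal.ofReal_toReal (measure_ne_top P _)).symm
      _ < ENNReal.ofReal (Real.exp (-t) * (P (satCyl (shift x) n)).toReal) :=
          (ENNReal.ofReal_lt_ofReal_iff (mul_pos (Real.exp_pos _) hnumR)).mpr h1
      _ = ε * P (satCyl (shift x) n) := by
          rw [ENNReal.ofReal_mul (le_of_lt (Real.exp_pos _)),
            ENNReal.ofReal_toReal (measure_ne_top P _)]
  have hnullset : P {x : ℕ → A | ¬ ∀ n, 0 < P (satCyl x n)} = 0 := by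
    have := ae_pos P
    rwa [ae_iff] at this
  have hnull : P ({x | t < ZmaxLog P x} \ E) = 0 := by
    refine measure_mono_null ?_ hnullset
    rintro x ⟨hx1, hx2⟩
    intro hpos
    exact hx2 (hsub ⟨hx1, hpos⟩)
  calc P {x | t < ZmaxLog P x}
      ≤ P ({x | t < ZmaxLog P x} ∩ E) + P ({x | t < ZmaxLog P x} \ E) :=
        measure_le_inter_add_diff P _ E
    _ ≤ P E + 0 := add_le_add (measure_mono Set.inter_subset_right) (le_of_eq hnull)
    _ = P E := add_zero _
    _ ≤ (Fintype.card A : ℝ≥0∞) * ε := chung P hinv ε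
    _ = ENNReal.ofReal (Fintype.card A * Real.exp (-t)) := by
        rw [ENNReal.ofReal_mul (Nat.cast_nonneg _), ENNReal.ofReal_natCast]

lemma integrable_ZmaxLog (P : Measure (ℕ → A)) [IsProbabilityMeasure P]
    (hinv : MeasurePreserving (shift : (ℕ → A) → (ℕ → A)) P P)
    (hnn : ∀ᵐ x ∂P, 0 ≤ ZmaxLog P x) : Integrable (ZmaxLog P) P := by
  refine ⟨(measurable_ZmaxLog P).aestronglyMeasurable, ?_⟩
  rw [hasFiniteIntegral_iff_norm]
  have heq1 : ∫⁻ x, ENNReal.ofReal ‖ZmaxLog P x‖ ∂P = ∫⁻ x, ENNReal.ofReal (ZmaxLog P x) ∂P := by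
    refine lintegral_congr_ae (hnn.mono fun x hx => ?_)
    simp only []
    rw [Real.norm_eq_abs, abs_of_nonneg hx]
  rw [heq1, lintegral_eq_lintegral_meas_lt P hnn (measurable_ZmaxLog P).aemeasurable]
  have hintexp : IntegrableOn (fun t : ℝ => Real.exp (-t)) (Set.Ioi (0 : ℝ)) := by
    simpa using exp_neg_integrableOn_Ioi 0 (by norm_num : (0:ℝ) < 1)
  have hintc : IntegrableOn (fun t : ℝ => (Fintype.card A : ℝ) * Real.exp (-t))
      (Set.Ioi (0 : ℝ)) := hintexp.const_mul _
  calc ∫⁻ t in Set.Ioi (0:ℝ), P {x | t < ZmaxLog P x}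
      ≤ ∫⁻ t in Set.Ioi (0:ℝ), ENNReal.ofReal ((Fintype.card A : ℝ) * Real.exp (-t)) :=
        lintegral_mono fun t => tail_bound P hinv t
    _ = ENNReal.ofReal (∫ t in Set.Ioi (0:ℝ), (Fintype.card A : ℝ) * Real.exp (-t)) := by
        refine (ofReal_integral_eq_lintegral_ofReal hintc ?_).symm
        exact Filter.Eventually.of_forall fun t => by positivity
    _ < ⊤ := ENNReal.ofReal_lt_top

end Stmt9Aux
end Chunk4

section Chunk5
open MeasureTheory Filter Set Real Stmt9Aux
open scoped ENNReal Classical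

variable {A : Type*} [MeasurableSpace A] [Fintype A] [Nonempty A]

namespace Stmt9Aux

lemma cyl_zero (x : ℕ → A) : cyl x 0 = Set.univ := by
  ext y; simp [cyl]

lemma Zf_zero (P : Measure (ℕ → A)) [IsProbabilityMeasure P] (x : ℕ → A) : Zf P 0 x = 1 := by
  rw [Zf]
  simp [cyl_zero, measure_univ]

lemma le_ZmaxLog {P : Measure (ℕ → A)} {x : ℕ → A}
    (hb : BddAbove (Set.range fun n : ℕ => Real.log (Zf P (n + 1) x))) (n : ℕ) :
    Real.log (Zf P (n + 1) x) ≤ ZmaxLog P x := by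
  unfold ZmaxLog
  exact le_ciSup hb n

lemma psi_nonneg (P : Measure (ℕ → A)) (m M : ℕ) (x : ℕ → A) : 0 ≤ psi P m M x :=
  Real.iSup_nonneg fun _ => abs_nonneg _

lemma measurable_psi (P : Measure (ℕ → A)) (m M : ℕ) : Measurable (psi P m M) := by
  unfold psi
  exact Measurable.iSup fun k =>
    ((Real.measurable_log.comp (measurable_Zf P k.val)).sub
      (Real.measurable_log.comp (measurable_Zf P M))).abs

lemma ae_good (P : Measure (ℕ → A)) [IsProbabilityMeasure P]
    (hinv : MeasurePreserving (shift : (ℕ → A) → (ℕ → A)) P P) (ZL : (ℕ → A) → ℝ)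
    (hZL : ∀ᵐ x ∂P, Tendsto (fun n : ℕ => Zf P (n + 1) x) atTop (nhds (ZL x))) :
    ∀ᵐ x ∂P, (∀ n, 1 ≤ Zf P n x) ∧
      Tendsto (fun n : ℕ => Real.log (Zf P (n + 1) x)) atTop (nhds (Real.log (ZL x))) ∧
      BddAbove (Set.range fun n : ℕ => Real.log (Zf P (n + 1) x)) := by
  filter_upwards [ae_pos P, hZL] with x hpos hten
  have h1 : ∀ n, 1 ≤ Zf P n x := one_le_Zf hinv hpos
  have hZL1 : 1 ≤ ZL x := ge_of_tendsto hten (Eventually.of_forall fun n => h1 (n + 1))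
  have h2 : Tendsto (fun n : ℕ => Real.log (Zf P (n + 1) x)) atTop (nhds (Real.log (ZL x))) :=
    (Real.continuousAt_log (by linarith)).tendsto.comp hten
  exact ⟨h1, h2, h2.bddAbove_range⟩

lemma psi_tendsto {P : Measure (ℕ → A)} {x : ℕ → A} {M : ℕ} {L : ℝ}
    (hten : Tendsto (fun k : ℕ => Real.log (Zf P k x)) atTop (nhds L)) :
    Tendsto (fun m => psi P m M x) atTop (nhds (|L - Real.log (Zf P M x)|)) := by
  set c := Real.log (Zf P M x) with hc
  rw [Metric.tendsto_atTop]
  intro ε hε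
  rw [Metric.tendsto_atTop] at hten
  obtain ⟨m₀, hm₀⟩ := hten (ε / 2) (by linarith)
  refine ⟨m₀, fun m hm => ?_⟩
  haveI : Nonempty {k : ℕ // m ≤ k} := ⟨⟨m, le_rfl⟩⟩
  have key : ∀ k : ℕ, m ≤ k → abs (abs (Real.log (Zf P k x) - c) - abs (L - c)) ≤ ε / 2 := by
    intro k hk
    have h1 := hm₀ k (le_trans hm hk)
    rw [Real.dist_eq] at h1
    have h2 := abs_abs_sub_abs_le_abs_sub (Real.log (Zf P k x) - c) (L - c)
    rw [sub_sub_sub_cancel_right] at h2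
    exact le_of_lt (lt_of_le_of_lt h2 h1)
  have hub : psi P m M x ≤ |L - c| + ε / 2 := by
    apply ciSup_le
    rintro ⟨k, hk⟩
    have := key k hk
    rw [abs_le] at this
    linarith [this.2]
  have hbdd : BddAbove (Set.range fun k : {k : ℕ // m ≤ k} =>
      |Real.log (Zf P k.val x) - c|) := by
    refine ⟨|L - c| + ε / 2, ?_⟩
    rintro r ⟨⟨k, hk⟩, rfl⟩
    have := key k hk
    rw [abs_le] at this
    linarith [this.2]
  have hlb : |L - c| - ε / 2 ≤ psi P m M x := by
    have h1 : |Real.log (Zf P m x) - c| ≤ psi P m M x := le_ciSup hbdd ⟨m, le_rfl⟩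
    have h2 := key m le_rfl
    rw [abs_le] at h2
    linarith [h2.1]
  rw [Real.dist_eq, abs_lt]
  constructor <;> linarith

end Stmt9Aux
end Chunk5

theorem stmt9 [Fintype A] (P : Measure (ℕ → A)) [IsProbabilityMeasure P]
    (hinv : MeasurePreserving (shift : (ℕ → A) → (ℕ → A)) P P)
    (ZL : (ℕ → A) → ℝ)
    (hZL : ∀ᵐ x ∂P, Tendsto (fun n : ℕ => Zf P (n + 1) x) atTop (nhds (ZL x))) :
    (∀ m M : ℕ, 1 ≤ M → M ≤ m →
      Tendsto (fun N : ℕ => ∫ x, (∑ k ∈ Finset.range N, psi P m M (shift^[k] x)) / N ∂P)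
        atTop (nhds (∫ x, psi P m M x ∂P))) ∧
    (∀ M : ℕ, 1 ≤ M →
      Tendsto (fun m : ℕ => ∫ x, psi P m M x ∂P) atTop
        (nhds (∫ x, |Real.log (ZL x) - Real.log (Zf P M x)| ∂P))) ∧
    Tendsto (fun M : ℕ => ∫ x, |Real.log (ZL x) - Real.log (Zf P M x)| ∂P)
      atTop (nhds 0) := by
  classical
  haveI hA : Nonempty A := by
    by_contra h
    rw [not_nonempty_iff] at h
    haveI : IsEmpty (ℕ → A) := ⟨fun f => h.false (f 0)⟩
    have h1 : P Set.univ = 1 := measure_univ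
    rw [Set.univ_eq_empty_iff.mpr inferInstance] at h1
    simp at h1
  have hgood := Stmt9Aux.ae_good P hinv ZL hZL
  -- |log Zf k| ≤ ZmaxLog for all k, a.e.
  have hlogle : ∀ᵐ x ∂P, ∀ k, |Real.log (Zf P k x)| ≤ ZmaxLog P x := by
    filter_upwards [hgood] with x hx k
    rw [abs_of_nonneg (Real.log_nonneg (hx.1 k))]
    cases k with
    | zero =>
        rw [Stmt9Aux.Zf_zero P x, Real.log_one]
        exact le_trans (Real.log_nonneg (hx.1 1)) (Stmt9Aux.le_ZmaxLog hx.2.2 0)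
    | succ n => exact Stmt9Aux.le_ZmaxLog hx.2.2 n
  have hnnZ : ∀ᵐ x ∂P, 0 ≤ ZmaxLog P x := by
    filter_upwards [hgood] with x hx
    exact le_trans (Real.log_nonneg (hx.1 1)) (Stmt9Aux.le_ZmaxLog hx.2.2 0)
  have hZint : Integrable (ZmaxLog P) P := Stmt9Aux.integrable_ZmaxLog P hinv hnnZ
  have hlogM_int : ∀ M : ℕ, Integrable (fun x => |Real.log (Zf P M x)|) P := by
    intro M
    refine hZint.mono
      ((Real.measurable_log.comp (Stmt9Aux.measurable_Zf P M)).abs.aestronglyMeasurable) ?_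
    filter_upwards [hlogle, hnnZ] with x hx hnn
    rw [Real.norm_eq_abs, Real.norm_eq_abs, abs_abs, abs_of_nonneg hnn]
    exact hx M
  have hbound_int : ∀ M : ℕ,
      Integrable (fun x => ZmaxLog P x + |Real.log (Zf P M x)|) P :=
    fun M => hZint.add (hlogM_int M)
  have hpsi_bound : ∀ m M : ℕ, ∀ᵐ x ∂P,
      ‖psi P m M x‖ ≤ ZmaxLog P x + |Real.log (Zf P M x)| := by
    intro m M
    filter_upwards [hlogle] with x hx
    rw [Real.norm_eq_abs, abs_of_nonneg (Stmt9Aux.psi_nonneg P m M x)]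
    haveI : Nonempty {k : ℕ // m ≤ k} := ⟨⟨m, le_rfl⟩⟩
    apply ciSup_le
    rintro ⟨k, hk⟩
    calc |Real.log (Zf P k x) - Real.log (Zf P M x)|
        ≤ |Real.log (Zf P k x)| + |Real.log (Zf P M x)| := abs_sub _ _
      _ ≤ ZmaxLog P x + |Real.log (Zf P M x)| := add_le_add_left (hx k) _
  have hpsi_int : ∀ m M : ℕ, Integrable (psi P m M) P := by
    intro m M
    refine (hbound_int M).mono ((Stmt9Aux.measurable_psi P m M).aestronglyMeasurable) ?_
    filter_upwards [hpsi_bound m M, hnnZ] with x hx hnn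
    rw [Real.norm_eq_abs]
    exact le_trans hx (le_abs_self _)
  refine ⟨?_, ?_, ?_⟩
  · -- Part 1: shift invariance
    intro m M hM hMm
    have hconst : ∀ᶠ N : ℕ in atTop,
        (∫ x, (∑ k ∈ Finset.range N, psi P m M (shift^[k] x)) / (N : ℝ) ∂P) =
          ∫ x, psi P m M x ∂P := by
      filter_upwards [eventually_ge_atTop 1] with N hN
      have hiter : ∀ k : ℕ, MeasurePreserving (shift^[k] : (ℕ → A) → (ℕ → A)) P P :=
        fun k => hinv.iterate k
      have hcomp_int : ∀ k : ℕ, Integrable (fun x => psi P m M (shift^[k] x)) P := by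
        intro k
        exact (integrable_map_measure ((Stmt9Aux.measurable_psi P m M).aestronglyMeasurable)
          (hiter k).measurable.aemeasurable).mp (by rw [(hiter k).map_eq]; exact hpsi_int m M)
      have hcomp_eq : ∀ k : ℕ, ∫ x, psi P m M (shift^[k] x) ∂P = ∫ x, psi P m M x ∂P := by
        intro k
        rw [← integral_map (hiter k).measurable.aemeasurable
          ((Stmt9Aux.measurable_psi P m M).aestronglyMeasurable), (hiter k).map_eq]
      rw [integral_div, integral_finset_sum _ (fun k _ => hcomp_int k),
        Finset.sum_congr rfl (fun k _ => hcomp_eq k), Finset.sum_const, Finset.card_range,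
        nsmul_eq_mul]
      rw [mul_comm, mul_div_assoc,
        div_self (Nat.cast_ne_zero.mpr (by omega : N ≠ 0) : (N:ℝ) ≠ 0), mul_one]
    exact Tendsto.congr' (hconst.mono fun N h => h.symm) tendsto_const_nhds
  · -- Part 2: monotone/dominated convergence in m
    intro M hM
    refine tendsto_integral_of_dominated_convergence
      (fun x => ZmaxLog P x + |Real.log (Zf P M x)|)
      (fun m => (Stmt9Aux.measurable_psi P m M).aestronglyMeasurable)
      (hbound_int M) (fun m => hpsi_bound m M) ?_
    filter_upwards [hgood] with x hx
    have hfull : Tendsto (fun k : ℕ => Real.log (Zf P k x)) atTop (nhds (Real.log (ZL x))) :=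
      (tendsto_add_atTop_iff_nat 1).mp hx.2.1
    exact Stmt9Aux.psi_tendsto hfull
  · -- Part 3: dominated convergence in M
    have hZLaesm : AEStronglyMeasurable ZL P :=
      aestronglyMeasurable_of_tendsto_ae atTop
        (fun n => (Stmt9Aux.measurable_Zf P (n + 1)).aestronglyMeasurable) hZL
    have hlogZL : AEStronglyMeasurable (fun x => Real.log (ZL x)) P :=
      (Real.measurable_log.comp_aemeasurable hZLaesm.aemeasurable).aestronglyMeasurable
    have hFmeas : ∀ M : ℕ,
        AEStronglyMeasurable (fun x => |Real.log (ZL x) - Real.log (Zf P M x)|) P :=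
      fun M => (measurable_abs.comp_aemeasurable
        ((Real.measurable_log.comp_aemeasurable hZLaesm.aemeasurable).sub
          (Real.measurable_log.comp (Stmt9Aux.measurable_Zf P M)).aemeasurable)).aestronglyMeasurable
    have hlogZLbd : ∀ᵐ x ∂P, 0 ≤ Real.log (ZL x) ∧ Real.log (ZL x) ≤ ZmaxLog P x := by
      filter_upwards [hgood] with x hx
      refine ⟨ge_of_tendsto hx.2.1 (Eventually.of_forall fun n =>
        Real.log_nonneg (hx.1 (n + 1))), ?_⟩
      exact le_of_tendsto hx.2.1 (Eventually.of_forall fun n => Stmt9Aux.le_ZmaxLog hx.2.2 n)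
    have hlogZL_int : Integrable (fun x => |Real.log (ZL x)|) P := by
      refine hZint.mono
        (measurable_abs.comp_aemeasurable hlogZL.aemeasurable).aestronglyMeasurable ?_
      filter_upwards [hlogZLbd, hnnZ] with x hx hnn
      rw [Real.norm_eq_abs, Real.norm_eq_abs, abs_abs, abs_of_nonneg hnn,
        abs_of_nonneg hx.1]
      exact hx.2
    have hbound3_int : Integrable (fun x => ZmaxLog P x + |Real.log (ZL x)|) P :=
      hZint.add hlogZL_int
    have hb3 : ∀ M : ℕ, ∀ᵐ x ∂P,
        ‖|Real.log (ZL x) - Real.log (Zf P M x)|‖ ≤ ZmaxLog P x + |Real.log (ZL x)| := by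
      intro M
      filter_upwards [hlogle] with x hx
      rw [Real.norm_eq_abs, abs_abs]
      calc |Real.log (ZL x) - Real.log (Zf P M x)|
          ≤ |Real.log (ZL x)| + |Real.log (Zf P M x)| := abs_sub _ _
        _ ≤ |Real.log (ZL x)| + ZmaxLog P x := add_le_add_right (hx M) _
        _ = ZmaxLog P x + |Real.log (ZL x)| := add_comm _ _
    have hlim3 : ∀ᵐ x ∂P, Tendsto
        (fun M : ℕ => |Real.log (ZL x) - Real.log (Zf P M x)|) atTop (nhds 0) := by
      filter_upwards [hgood] with x hx
      have hfull : Tendsto (fun k : ℕ => Real.log (Zf P k x)) atTop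
          (nhds (Real.log (ZL x))) := (tendsto_add_atTop_iff_nat 1).mp hx.2.1
      have h1 : Tendsto (fun M : ℕ => Real.log (ZL x) - Real.log (Zf P M x)) atTop
          (nhds (Real.log (ZL x) - Real.log (ZL x))) := tendsto_const_nhds.sub hfull
      rw [sub_self] at h1
      simpa using h1.abs
    have := tendsto_integral_of_dominated_convergence (μ := P)
      (F := fun M x => |Real.log (ZL x) - Real.log (Zf P M x)|) (f := fun _ => (0 : ℝ))
      (fun x => ZmaxLog P x + |Real.log (ZL x)|) hFmeas hbound3_int hb3 hlim3
    simpa using this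
end
end

section
/- For any parsing of x_1^N into blocks w_1^{(N)},…,w_{c_N}^{(N)} and any m ≥ M ≥ 1, the sum of the blockwise residuals satisfies Σ_{i=1}^{c_N} |J_{ℓ_i,M}(w_i^{(N)})| ≤ Σ_{k=0}^{N−1} ψ_{m,M}(T^k x) + Σ_{i=1}^{c_N} Σ_{k=0}^{m} (log Z_{k+1}(T^{r_{i,k,N}} x) + log Z_M(T^{r_{i,k,N}} x)), where J_{n,M}(w_i^{(N)}) := Σ_{k=0}^{ℓ_i−1} (log Z_{n−k} − log Z_M)(T^{k+L_{i−1}} x) and ψ_{m,M} := sup_{k≥m} |log Z_k − log Z_M|. -/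
open MeasureTheory Filter Finset
open scoped ENNReal

noncomputable section

variable {A : Type*}

variable [MeasurableSpace A]

structure Parsing (A : Type*) [MeasurableSpace A] where
  c : ℕ → (ℕ → A) → ℕ
  L : ℕ → (ℕ → A) → ℕ → ℕ
  L_zero : ∀ N x, L N x 0 = 0
  L_last : ∀ N x, L N x (c N x) = N
  L_strict : ∀ N x, ∀ i < c N x, L N x i < L N x (i + 1)
  meas_c : ∀ N, Measurable (c N)
  meas_L : ∀ N i, Measurable fun x => L N x i

/-- probability of the cylinder of the `i`-th parsing block of `x₁^N` -/
def blockP (P : Measure (ℕ → A)) (p : Parsing A) (N : ℕ) (x : ℕ → A) (i : ℕ) : ENNReal :=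
  P (cyl (shift^[p.L N x i] x) (p.L N x (i + 1) - p.L N x i))

/-- `∑ᵢ (− log P([wᵢ^{(N)}]))` -/
def parseSum (P : Measure (ℕ → A)) (p : Parsing A) (N : ℕ) (x : ℕ → A) : ℝ :=
  ∑ i ∈ Finset.range (p.c N x), -Real.log ((blockP P p N x i).toReal)

/-- the reversed index `r_{i,k,N} = L_{i-1,N} + ℓ_{i,N} − 1 − k` (with `i` 0-based). -/
def rIdx (p : Parsing A) (N : ℕ) (x : ℕ → A) (i k : ℕ) : ℕ :=
  p.L N x (i + 1) - 1 - k

/-- blockwise residual `J_{ℓᵢ,M}(wᵢ^{(N)})`. -/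
def Jblock (P : Measure (ℕ → A)) (p : Parsing A) (M N : ℕ) (x : ℕ → A) (i : ℕ) : ℝ :=
  ∑ k ∈ Finset.range (p.L N x (i + 1) - p.L N x i),
    (Real.log (Zf P ((p.L N x (i + 1) - p.L N x i) - k) (shift^[p.L N x i + k] x))
      - Real.log (Zf P M (shift^[p.L N x i + k] x)))

/-- the measurable atom of a point -/
def matom (a : A) : Set A := ⋂₀ {s : Set A | MeasurableSet s ∧ a ∈ s}

lemma mem_matom (a : A) : a ∈ matom a := fun s hs => hs.2

lemma matom_subset {a : A} {s : Set A} (hs : MeasurableSet s) (ha : a ∈ s) :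
    matom a ⊆ s := fun _ hb => hb s ⟨hs, ha⟩

lemma matom_eq_of_mem {a b : A} (h : b ∈ matom a) : matom b = matom a := by
  have hab : ∀ s : Set A, MeasurableSet s → (a ∈ s ↔ b ∈ s) := by
    intro s hs
    constructor
    · intro has; exact matom_subset hs has h
    · intro hbs
      by_contra hna
      exact matom_subset hs.compl hna h hbs
  apply Set.eq_of_subset_of_subset
  · intro c hc s hs
    exact hc s ⟨hs.1, (hab s hs.1).mp hs.2⟩
  · intro c hc s hs
    exact hc s ⟨hs.1, (hab s hs.1).mpr hs.2⟩

lemma matom_eq_of_inter {a b : A} (h : (matom a ∩ matom b).Nonempty) :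
    matom a = matom b := by
  obtain ⟨c, hca, hcb⟩ := h
  rw [← matom_eq_of_mem hca, matom_eq_of_mem hcb]

lemma measurableSet_matom [Finite A] (a : A) : MeasurableSet (matom a) := by
  apply MeasurableSet.sInter
  · exact (Set.toFinite _).countable
  · exact fun t ht => ht.1

/-- every pi-measurable set is invariant under replacing coordinates within atoms -/
lemma measurableSet_invariant {t : Set (ℕ → A)} (ht : MeasurableSet t)
    {y y' : ℕ → A} (h : ∀ i, y' i ∈ matom (y i)) : y ∈ t ↔ y' ∈ t := by
  let m' : MeasurableSpace (ℕ → A) :=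
    { MeasurableSet' := fun t => ∀ ⦃y y' : ℕ → A⦄, (∀ i, y' i ∈ matom (y i)) → (y ∈ t ↔ y' ∈ t)
      measurableSet_empty := fun _ _ _ => Iff.rfl
      measurableSet_compl := fun t htt y y' h => not_congr (htt h)
      measurableSet_iUnion := fun f hf y y' h => by
        simp only [Set.mem_iUnion]
        exact exists_congr fun i => hf i h }
  have hle : (MeasurableSpace.pi : MeasurableSpace (ℕ → A)) ≤ m' := by
    refine iSup_le fun i => ?_
    rintro t ⟨s, hs, rfl⟩
    intro y y' h
    show y i ∈ s ↔ y' i ∈ s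
    constructor
    · intro hy; exact matom_subset hs hy (h i)
    · intro hy'
      by_contra hy
      exact matom_subset hs.compl hy (h i) hy'
  exact hle t ht h

/-- the measurable hull cylinder -/
def mAcyl (x : ℕ → A) (n : ℕ) : Set (ℕ → A) := {y | ∀ i < n, y i ∈ matom (x i)}

lemma measurableSet_mAcyl [Finite A] (x : ℕ → A) (n : ℕ) :
    MeasurableSet (mAcyl x n) := by
  have : mAcyl x n = ⋂ i ∈ Finset.range n, (fun y : ℕ → A => y i) ⁻¹' matom (x i) := by
    ext y
    simp [mAcyl, Set.mem_iInter]
  rw [this]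
  exact MeasurableSet.biInter (Finset.range n).countable_toSet
    fun i _ => (measurable_pi_apply i) (measurableSet_matom (x i))

lemma cyl_subset_mAcyl (x : ℕ → A) (n : ℕ) : cyl x n ⊆ mAcyl x n :=
  fun y hy i hi => (hy i hi) ▸ mem_matom (y i)

lemma measure_cyl_eq [Finite A] (P : Measure (ℕ → A)) (x : ℕ → A) (n : ℕ) :
    P (cyl x n) = P (mAcyl x n) := by
  refine le_antisymm (measure_mono (cyl_subset_mAcyl x n)) ?_
  rw [measure_eq_iInf (cyl x n)]
  refine le_iInf fun t => le_iInf fun hsub => le_iInf fun htm => measure_mono ?_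
  intro y hy
  have hy' : (fun i => if i < n then x i else y i) ∈ t := by
    apply hsub
    intro i hi
    simp [hi]
  refine (measurableSet_invariant htm (y := fun i => if i < n then x i else y i) ?_).mp hy'
  intro i
  by_cases hi : i < n
  · simpa [hi] using hy i hi
  · simp only [hi, if_false]
    exact mem_matom (y i)

lemma measure_cyl_congr [Finite A] (P : Measure (ℕ → A)) {x y : ℕ → A} {n : ℕ}
    (h : ∀ i < n, matom (x i) = matom (y i)) : P (cyl x n) = P (cyl y n) := by
  rw [measure_cyl_eq, measure_cyl_eq]
  congr 1
  ext z
  constructor <;> intro hz i hi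
  · rw [← h i hi]; exact hz i hi
  · rw [h i hi]; exact hz i hi

lemma Zf_atom_congr [Finite A] (P : Measure (ℕ → A)) {x y : ℕ → A} {n : ℕ}
    (h : ∀ i < n, matom (x i) = matom (y i)) : Zf P n x = Zf P n y := by
  unfold Zf
  rw [measure_cyl_congr P h, measure_cyl_congr (x := shift x) (y := shift y) P ?_]
  intro i hi
  exact h (i + 1) (by omega)

lemma cyl_zero (x : ℕ → A) : cyl x 0 = Set.univ := by
  ext y; simp [cyl]

lemma Zf_zero (P : Measure (ℕ → A)) [IsProbabilityMeasure P] (x : ℕ → A) :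
    Zf P 0 x = 1 := by
  simp [Zf, cyl_zero]

lemma one_le_Zf [Finite A] (P : Measure (ℕ → A)) [IsProbabilityMeasure P]
    (hinv : MeasurePreserving (shift : (ℕ → A) → (ℕ → A)) P P)
    {x : ℕ → A} {n : ℕ} (hx : P (cyl x n) ≠ 0) : 1 ≤ Zf P n x := by
  have key : P (cyl x n) ≤ P (cyl (shift x) (n - 1)) := by
    calc P (cyl x n) ≤ P (shift ⁻¹' mAcyl (shift x) (n - 1)) := by
          apply measure_mono
          intro y hy i hi
          have : shift y i = shift x i := hy (i + 1) (by omega)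
          exact this ▸ mem_matom _
      _ = P (mAcyl (shift x) (n - 1)) := hinv.measure_preimage
            (measurableSet_mAcyl _ _).nullMeasurableSet
      _ = P (cyl (shift x) (n - 1)) := (measure_cyl_eq P _ _).symm
  unfold Zf
  rw [le_div_iff₀ (ENNReal.toReal_pos hx (measure_ne_top P _))]
  rw [one_mul]
  exact ENNReal.toReal_mono (measure_ne_top P _) key

lemma log_Zf_nonneg [Finite A] (P : Measure (ℕ → A)) [IsProbabilityMeasure P]
    (hinv : MeasurePreserving (shift : (ℕ → A) → (ℕ → A)) P P)
    {x : ℕ → A} {n : ℕ} (hx : P (cyl x n) ≠ 0) : 0 ≤ Real.log (Zf P n x) :=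
  Real.log_nonneg (one_le_Zf P hinv hx)

section Maximal

variable [Fintype A] [Nonempty A]

def rep (a : A) : A := Function.invFun (matom (A := A)) (matom a)

lemma matom_rep (a : A) : matom (rep a) = matom a :=
  Function.invFun_eq ⟨a, rfl⟩

lemma rep_congr {a b : A} (h : matom a = matom b) : rep a = rep b := by
  unfold rep; rw [h]

lemma rep_rep (a : A) : rep (rep a) = rep a := rep_congr (matom_rep a)

def extF {n : ℕ} (w : Fin n → A) : ℕ → A :=
  fun i => if h : i < n then w ⟨i, h⟩ else Classical.arbitrary A

lemma extF_lt {n : ℕ} (w : Fin n → A) {i : ℕ} (h : i < n) : extF w i = w ⟨i, h⟩ :=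
  dif_pos h

def Dset (P : Measure (ℕ → A)) (r : ℝ) (n : ℕ) : Set (ℕ → A) :=
  {x | r < Zf P n x ∧ ∀ j, 1 ≤ j → j < n → Zf P j x ≤ r}

def Sfin (P : Measure (ℕ → A)) (r : ℝ) (n : ℕ) : Finset (Fin n → A) :=
  @Finset.filter _ (fun w => (∀ i, rep (w i) = w i) ∧ extF w ∈ Dset P r n)
    (Classical.decPred _) Finset.univ

lemma mem_Sfin {P : Measure (ℕ → A)} {r : ℝ} {n : ℕ} {w : Fin n → A} :
    w ∈ Sfin P r n ↔ (∀ i, rep (w i) = w i) ∧ extF w ∈ Dset P r n := by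
  classical
  unfold Sfin
  rw [Finset.filter_congr_decidable, Finset.mem_filter]
  simp

def tailF {n : ℕ} (w : Fin n → A) : Fin (n - 1) → A :=
  fun i => w ⟨i.1 + 1, by have := i.isLt; omega⟩

def tcyl {n : ℕ} (w : Fin n → A) : Set (ℕ → A) := mAcyl (extF (tailF w)) (n - 1)

variable {P : Measure (ℕ → A)} [IsProbabilityMeasure P] {r : ℝ}

lemma Sfin_pos {n : ℕ} {w : Fin n → A} (hw : w ∈ Sfin P r n) (hr : 1 ≤ r) : 1 ≤ n := by
  by_contra h
  have hn : n = 0 := by omega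
  subst hn
  have h2 := (mem_Sfin.mp hw).2.1
  rw [Zf_zero] at h2
  linarith

lemma Dset_subset_biUnion (r : ℝ) (n : ℕ) :
    Dset P r n ⊆ ⋃ w ∈ Sfin P r n, mAcyl (extF w) n := by
  intro x hx
  set w : Fin n → A := fun i => rep (x i.1) with hw
  have hatom : ∀ i < n, matom (extF w i) = matom (x i) := by
    intro i hi
    rw [extF_lt _ hi]
    exact matom_rep _
  have hZ : ∀ j ≤ n, Zf P j (extF w) = Zf P j x := fun j hj =>
    Zf_atom_congr P (fun i hi => hatom i (lt_of_lt_of_le hi hj))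
  refine Set.mem_iUnion₂.mpr ⟨w, ?_, ?_⟩
  · rw [mem_Sfin]
    refine ⟨fun i => rep_rep _, ?_, ?_⟩
    · rw [hZ n le_rfl]; exact hx.1
    · intro j h1 hj; rw [hZ j (le_of_lt hj)]; exact hx.2 j h1 hj
  · intro i hi; rw [hatom i hi]; exact mem_matom _

lemma measure_Dset_le (r : ℝ) (n : ℕ) :
    P (Dset P r n) ≤ ∑ w ∈ Sfin P r n, P (mAcyl (extF w) n) :=
  le_trans (measure_mono (Dset_subset_biUnion r n)) (measure_biUnion_finset_le _ _)

lemma key_estimate {n : ℕ} {w : Fin n → A} (hw : w ∈ Sfin P r n) (hr : 1 ≤ r) :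
    ENNReal.ofReal r * P (mAcyl (extF w) n) ≤ P (tcyl w) := by
  have hZ : r < Zf P n (extF w) := (mem_Sfin.mp hw).2.1
  have hdt : P (cyl (extF w) n) ≠ ⊤ := measure_ne_top _ _
  have hnt : P (cyl (shift (extF w)) (n - 1)) ≠ ⊤ := measure_ne_top _ _
  have hd0 : (P (cyl (extF w) n)).toReal ≠ 0 := by
    intro h0
    rw [Zf, h0, div_zero] at hZ
    linarith
  have hdpos : 0 < (P (cyl (extF w) n)).toReal :=
    lt_of_le_of_ne ENNReal.toReal_nonneg (Ne.symm hd0)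
  have hlt : r * (P (cyl (extF w) n)).toReal ≤ (P (cyl (shift (extF w)) (n - 1))).toReal := by
    rw [Zf] at hZ
    nlinarith [(lt_div_iff₀ hdpos).mp hZ]
  calc ENNReal.ofReal r * P (mAcyl (extF w) n)
      = ENNReal.ofReal r * P (cyl (extF w) n) := by rw [← measure_cyl_eq]
    _ = ENNReal.ofReal (r * (P (cyl (extF w) n)).toReal) := by
        rw [ENNReal.ofReal_mul (by linarith), ENNReal.ofReal_toReal hdt]
    _ ≤ ENNReal.ofReal ((P (cyl (shift (extF w)) (n - 1))).toReal) :=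
        ENNReal.ofReal_le_ofReal hlt
    _ = P (cyl (shift (extF w)) (n - 1)) := ENNReal.ofReal_toReal hnt
    _ = P (cyl (extF (tailF w)) (n - 1)) := by
        refine measure_cyl_congr P (fun i hi => ?_)
        have h1 : i + 1 < n := by omega
        show matom (extF w (i + 1)) = matom (extF (tailF w) i)
        rw [extF_lt _ h1, extF_lt _ hi]
        rfl
    _ = P (mAcyl (extF (tailF w)) (n - 1)) := measure_cyl_eq P _ _

lemma disj_same {n : ℕ} {w w' : Fin n → A} (hw : w ∈ Sfin P r n) (hw' : w' ∈ Sfin P r n)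
    (hne : w ≠ w') (hhead : extF w 0 = extF w' 0) : Disjoint (tcyl w) (tcyl w') := by
  obtain ⟨i, hi⟩ : ∃ i, w i ≠ w' i := by
    by_contra h
    push_neg at h
    exact hne (funext h)
  have hi0 : i.1 ≠ 0 := by
    intro h0
    apply hi
    have h0n : (0:ℕ) < n := by have := i.isLt; omega
    have : w ⟨0, h0n⟩ = w' ⟨0, h0n⟩ := by
      rw [← extF_lt w h0n, ← extF_lt w' h0n]; exact hhead
    have heq : i = ⟨0, h0n⟩ := Fin.ext h0
    rw [heq]; exact this
  have hmne : matom (w i) ≠ matom (w' i) := by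
    intro hmeq
    exact hi (((mem_Sfin.mp hw).1 i).symm.trans ((rep_congr hmeq).trans ((mem_Sfin.mp hw').1 i)))
  rw [Set.disjoint_left]
  intro y hy hy'
  obtain ⟨j, hj⟩ : ∃ j, i.1 = j + 1 := ⟨i.1 - 1, by omega⟩
  have hjn : j < n - 1 := by have := i.isLt; omega
  have h1 := hy j hjn
  have h2 := hy' j hjn
  rw [extF_lt _ hjn] at h1 h2
  have hti : tailF w ⟨j, hjn⟩ = w i := by
    show w _ = w i
    congr 1
    exact Fin.ext (by simp [hj])
  have hti' : tailF w' ⟨j, hjn⟩ = w' i := by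
    show w' _ = w' i
    congr 1
    exact Fin.ext (by simp [hj])
  rw [hti] at h1
  rw [hti'] at h2
  exact hmne (matom_eq_of_inter ⟨y j, h1, h2⟩)

lemma disj_diff {n n' : ℕ} (hnn : n < n') {w : Fin n → A} {w' : Fin n' → A}
    (hw : w ∈ Sfin P r n) (hw' : w' ∈ Sfin P r n') (hr : 1 ≤ r)
    (hhead : extF w 0 = extF w' 0) : Disjoint (tcyl w) (tcyl w') := by
  have h1n : 1 ≤ n := Sfin_pos hw hr
  rw [Set.disjoint_left]
  intro y hy hy'
  set z : ℕ → A := fun i => Nat.casesOn i (extF w 0) y with hz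
  have key : ∀ (nn : ℕ) (v : Fin nn → A), extF w 0 = extF v 0 →
      (∀ j < nn - 1, y j ∈ matom (extF (tailF v) j)) →
      ∀ i < nn, matom (z i) = matom (extF v i) := by
    intro nn v hh hyv i hi
    cases i with
    | zero => rw [show z 0 = extF v 0 from hh]
    | succ j =>
      have hj : j < nn - 1 := by omega
      have h1 := hyv j hj
      have he : extF (tailF v) j = extF v (j + 1) := by
        rw [extF_lt _ hj, extF_lt _ (show j + 1 < nn by omega)]
        rfl
      rw [he] at h1
      exact matom_eq_of_mem h1
  have c1 := key n w rfl hy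
  have c2 := key n' w' hhead hy'
  have hgt : r < Zf P n z := by
    rw [Zf_atom_congr P c1]
    exact (mem_Sfin.mp hw).2.1
  have hle : Zf P n z ≤ r := by
    rw [Zf_atom_congr P (fun i hi => c2 i (lt_of_lt_of_le hi (le_of_lt hnn)))]
    exact (mem_Sfin.mp hw').2.2 n h1n hnn
  linarith

def SfinA (P : Measure (ℕ → A)) (r : ℝ) (n : ℕ) (a : A) : Finset (Fin n → A) :=
  @Finset.filter _ (fun w => extF w 0 = a) (Classical.decPred _) (Sfin P r n)

lemma mem_SfinA {n : ℕ} {a : A} {w : Fin n → A} :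
    w ∈ SfinA P r n a ↔ w ∈ Sfin P r n ∧ extF w 0 = a := by
  classical
  unfold SfinA
  rw [Finset.filter_congr_decidable, Finset.mem_filter]

lemma measurableSet_tcyl {n : ℕ} (w : Fin n → A) : MeasurableSet (tcyl w) :=
  measurableSet_mAcyl _ _

lemma fiber_sum_le (hr : 1 ≤ r) (K : ℕ) (a : A) :
    ∑ n ∈ Finset.range K, ∑ w ∈ SfinA P r n a, P (tcyl w) ≤ 1 := by
  have hVn : ∀ n, ∑ w ∈ SfinA P r n a, P (tcyl w) = P (⋃ w ∈ SfinA P r n a, tcyl w) := by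
    intro n
    refine (measure_biUnion_finset ?_ (fun w _ => measurableSet_tcyl w)).symm
    intro w hwmem w' hw'mem hne
    have h1 := mem_SfinA.mp hwmem
    have h2 := mem_SfinA.mp hw'mem
    exact disj_same h1.1 h2.1 hne (h1.2.trans h2.2.symm)
  calc ∑ n ∈ Finset.range K, ∑ w ∈ SfinA P r n a, P (tcyl w)
      = ∑ n ∈ Finset.range K, P (⋃ w ∈ SfinA P r n a, tcyl w) := by
        exact Finset.sum_congr rfl fun n _ => hVn n
    _ = P (⋃ n ∈ Finset.range K, ⋃ w ∈ SfinA P r n a, tcyl w) := by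
        refine (measure_biUnion_finset ?_ (fun n _ =>
          MeasurableSet.biUnion (SfinA P r n a).countable_toSet
            (fun w _ => measurableSet_tcyl w))).symm
        intro n hn n' hn' hne
        simp only [Function.onFun]
        rw [Set.disjoint_left]
        intro y hy hy'
        obtain ⟨w, hwmem, hyw⟩ := Set.mem_iUnion₂.mp hy
        obtain ⟨w', hw'mem, hyw'⟩ := Set.mem_iUnion₂.mp hy'
        have h1 := mem_SfinA.mp hwmem
        have h2 := mem_SfinA.mp hw'mem
        have hh := h1.2.trans h2.2.symm
        rcases lt_or_gt_of_ne hne with hlt | hgt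
        · exact Set.disjoint_left.mp (disj_diff hlt h1.1 h2.1 hr hh) hyw hyw'
        · exact Set.disjoint_left.mp (disj_diff hgt h2.1 h1.1 hr hh.symm) hyw' hyw
    _ ≤ 1 := prob_le_one

lemma total_sum_le (hr : 1 ≤ r) (K : ℕ) :
    ∑ n ∈ Finset.range K, ∑ w ∈ Sfin P r n, P (tcyl w) ≤ (Fintype.card A : ℝ≥0∞) := by
  classical
  have hsplit : ∀ n, ∑ w ∈ Sfin P r n, P (tcyl w)
      = ∑ a : A, ∑ w ∈ (Sfin P r n).filter (fun w => extF w 0 = a), P (tcyl w) := by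
    intro n
    exact (Finset.sum_fiberwise (Sfin P r n) (fun w => extF w 0) (fun w => P (tcyl w))).symm
  have hAeq : ∀ n (a : A), (Sfin P r n).filter (fun w => extF w 0 = a) = SfinA P r n a := by
    intro n a
    unfold SfinA
    rw [Finset.filter_congr_decidable]
  calc ∑ n ∈ Finset.range K, ∑ w ∈ Sfin P r n, P (tcyl w)
      = ∑ a : A, ∑ n ∈ Finset.range K, ∑ w ∈ SfinA P r n a, P (tcyl w) := by
        rw [Finset.sum_comm]
        refine Finset.sum_congr rfl fun n _ => ?_
        rw [hsplit n]
        exact Finset.sum_congr rfl fun a _ => by rw [hAeq n a]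
    _ ≤ ∑ _a : A, (1 : ℝ≥0∞) := Finset.sum_le_sum fun a _ => fiber_sum_le hr K a
    _ = (Fintype.card A : ℝ≥0∞) := by simp

lemma maximal_ineq (hr : 1 ≤ r) :
    ENNReal.ofReal r * P {x | ∃ n, r < Zf P n x} ≤ (Fintype.card A : ℝ≥0∞) := by
  have hsub : {x | ∃ n, r < Zf P n x} ⊆ ⋃ n, Dset P r n := by
    intro x hx
    have hfind := Nat.find_spec hx
    refine Set.mem_iUnion.mpr ⟨Nat.find hx, hfind, ?_⟩
    intro j _ hj
    exact le_of_not_gt (Nat.find_min hx hj)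
  calc ENNReal.ofReal r * P {x | ∃ n, r < Zf P n x}
      ≤ ENNReal.ofReal r * ∑' n, P (Dset P r n) :=
        mul_le_mul_right (le_trans (measure_mono hsub) (measure_iUnion_le _)) _
    _ = ∑' n, ENNReal.ofReal r * P (Dset P r n) := ENNReal.tsum_mul_left.symm
    _ ≤ ∑' n, ∑ w ∈ Sfin P r n, P (tcyl w) := by
        refine ENNReal.tsum_le_tsum fun n => ?_
        calc ENNReal.ofReal r * P (Dset P r n)
            ≤ ENNReal.ofReal r * ∑ w ∈ Sfin P r n, P (mAcyl (extF w) n) :=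
              mul_le_mul_right (measure_Dset_le r n) _
          _ = ∑ w ∈ Sfin P r n, ENNReal.ofReal r * P (mAcyl (extF w) n) := Finset.mul_sum _ _ _
          _ ≤ ∑ w ∈ Sfin P r n, P (tcyl w) :=
              Finset.sum_le_sum fun w hw => key_estimate hw hr
    _ ≤ (Fintype.card A : ℝ≥0∞) := by
        rw [ENNReal.tsum_eq_iSup_sum]
        refine iSup_le fun s => ?_
        obtain ⟨K, hK⟩ := s.exists_nat_subset_range
        exact le_trans (Finset.sum_le_sum_of_subset hK) (total_sum_le hr K)

lemma ae_bddAbove_Zf : P {x | ¬ BddAbove (Set.range fun n => Zf P n x)} = 0 := by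
  set S := {x | ¬ BddAbove (Set.range fun n => Zf P n x)} with hS
  have hsub : ∀ j : ℕ, S ⊆ {x | ∃ n, ((j : ℝ) + 1) < Zf P n x} := by
    intro j x hx
    obtain ⟨v, ⟨n, rfl⟩, hv⟩ := not_bddAbove_iff.mp hx ((j : ℝ) + 1)
    exact ⟨n, hv⟩
  have hbound : ∀ j : ℕ, ((j : ℝ≥0∞) + 1) * P S ≤ (Fintype.card A : ℝ≥0∞) := by
    intro j
    have h1 : (1 : ℝ) ≤ (j : ℝ) + 1 := by
      have : (0:ℝ) ≤ (j:ℝ) := Nat.cast_nonneg j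
      linarith
    have hre : ENNReal.ofReal ((j : ℝ) + 1) = (j : ℝ≥0∞) + 1 := by
      rw [ENNReal.ofReal_add (Nat.cast_nonneg j) zero_le_one, ENNReal.ofReal_natCast,
        ENNReal.ofReal_one]
    calc ((j : ℝ≥0∞) + 1) * P S
        ≤ ((j : ℝ≥0∞) + 1) * P {x | ∃ n, ((j : ℝ) + 1) < Zf P n x} :=
          mul_le_mul_right (measure_mono (hsub j)) _
      _ ≤ (Fintype.card A : ℝ≥0∞) := hre ▸ maximal_ineq h1
  by_contra hP
  obtain ⟨j, hj⟩ := ENNReal.exists_nat_gt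
    (show (Fintype.card A : ℝ≥0∞) / P S ≠ ⊤ from
      (ENNReal.div_lt_top (by simp) hP).ne)
  have hlt : (Fintype.card A : ℝ≥0∞) < j * P S := by
    rwa [ENNReal.div_lt_iff (Or.inl hP) (Or.inl (measure_ne_top P S))] at hj
  exact lt_irrefl _ (lt_of_lt_of_le hlt
    (le_trans (mul_le_mul_left le_self_add _) (hbound j)))

lemma ae_pos_cyl : P {x | ∃ n, P (cyl x n) = 0} = 0 := by
  have hsub : {x | ∃ n, P (cyl x n) = 0} ⊆ ⋃ n, {x | P (cyl x n) = 0} := by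
    intro x hx
    obtain ⟨n, hn⟩ := hx
    exact Set.mem_iUnion.mpr ⟨n, hn⟩
  refine measure_mono_null hsub (measure_iUnion_null fun n => ?_)
  classical
  set F : Finset (Fin n → A) :=
    Finset.univ.filter (fun w : Fin n → A => P (mAcyl (extF w) n) = 0) with hF
  have hsub2 : {x | P (cyl x n) = 0} ⊆ ⋃ w ∈ F, mAcyl (extF w) n := by
    intro x hx
    set w : Fin n → A := fun i => x i.1 with hw
    have hatom : ∀ i < n, matom (extF w i) = matom (x i) := by
      intro i hi
      rw [extF_lt _ hi]
    refine Set.mem_iUnion₂.mpr ⟨w, ?_, ?_⟩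
    · rw [hF, Finset.mem_filter]
      refine ⟨Finset.mem_univ _, ?_⟩
      rw [← measure_cyl_eq, measure_cyl_congr P hatom]
      exact hx
    · intro i hi
      rw [hatom i hi]
      exact mem_matom _
  refine measure_mono_null hsub2 ?_
  refine le_antisymm (le_trans (measure_biUnion_finset_le _ _) ?_) zero_le
  rw [Finset.sum_eq_zero]
  intro w hw
  rw [hF, Finset.mem_filter] at hw
  exact hw.2

lemma ae_good (hinv : MeasurePreserving (shift : (ℕ → A) → (ℕ → A)) P P) :
    ∀ᵐ x ∂P, ∀ j : ℕ, (∀ n, P (cyl (shift^[j] x) n) ≠ 0) ∧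
      BddAbove (Set.range fun n => Zf P n (shift^[j] x)) := by
  set bad : Set (ℕ → A) :=
    {x | ∃ n, P (cyl x n) = 0} ∪ {x | ¬ BddAbove (Set.range fun n => Zf P n x)} with hbad
  have hbadnull : P bad = 0 := measure_union_null ae_pos_cyl ae_bddAbove_Zf
  have hiter : ∀ j : ℕ, P ((shift^[j]) ⁻¹' bad) = 0 := fun j =>
    ((hinv.iterate j).quasiMeasurePreserving).preimage_null hbadnull
  rw [ae_iff]
  refine measure_mono_null ?_ (measure_iUnion_null hiter)
  intro x hx
  simp only [Set.mem_setOf_eq] at hx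
  push_neg at hx
  obtain ⟨j, hj⟩ := hx
  refine Set.mem_iUnion.mpr ⟨j, ?_⟩
  show shift^[j] x ∈ bad
  by_cases h : ∀ n, P (cyl (shift^[j] x) n) ≠ 0
  · exact Or.inr (hj h)
  · push_neg at h
    exact Or.inl h

lemma bddAbove_abs_log (hinv : MeasurePreserving (shift : (ℕ → A) → (ℕ → A)) P P)
    {y : ℕ → A} (hpos : ∀ n, P (cyl y n) ≠ 0)
    (hb : BddAbove (Set.range fun n => Zf P n y)) (m M : ℕ) :
    BddAbove (Set.range fun k : {k : ℕ // m ≤ k} =>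
      |Real.log (Zf P k.1 y) - Real.log (Zf P M y)|) := by
  obtain ⟨B, hB⟩ := hb
  refine ⟨Real.log B + Real.log (Zf P M y), ?_⟩
  rintro v ⟨⟨k, hk⟩, rfl⟩
  have h1 : 1 ≤ Zf P k y := one_le_Zf P hinv (hpos k)
  have h2 : 0 ≤ Real.log (Zf P M y) := Real.log_nonneg (one_le_Zf P hinv (hpos M))
  have h3 : Real.log (Zf P k y) ≤ Real.log B :=
    Real.log_le_log (by linarith) (hB ⟨k, rfl⟩)
  have h4 : 0 ≤ Real.log (Zf P k y) := Real.log_nonneg h1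
  have h5 : |Real.log (Zf P k y) - Real.log (Zf P M y)|
      ≤ Real.log (Zf P k y) + Real.log (Zf P M y) := by
    rw [abs_le]
    constructor <;> linarith
  simp only []
  linarith

lemma psi_nonneg' {y : ℕ → A} {m M : ℕ}
    (hbdd : BddAbove (Set.range fun k : {k : ℕ // m ≤ k} =>
      |Real.log (Zf P k.1 y) - Real.log (Zf P M y)|)) : 0 ≤ psi P m M y :=
  le_trans (abs_nonneg _) (le_ciSup hbdd ⟨m, le_rfl⟩)

lemma abs_le_psi {y : ℕ → A} {m M : ℕ}
    (hbdd : BddAbove (Set.range fun k : {k : ℕ // m ≤ k} =>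
      |Real.log (Zf P k.1 y) - Real.log (Zf P M y)|))
    {k : ℕ} (hk : m ≤ k) :
    |Real.log (Zf P k y) - Real.log (Zf P M y)| ≤ psi P m M y :=
  le_ciSup hbdd ⟨k, hk⟩

end Maximal

lemma sum_blocks (f : ℕ → ℝ) (L : ℕ → ℕ) (c : ℕ) (h0 : L 0 = 0)
    (hmono : ∀ i < c, L i ≤ L (i + 1)) :
    ∑ i ∈ Finset.range c, ∑ k ∈ Finset.range (L (i + 1) - L i), f (L i + k)
      = ∑ j ∈ Finset.range (L c), f j := by
  induction c with
  | zero => simp [h0]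
  | succ c ih =>
    rw [Finset.sum_range_succ, ih (fun i hi => hmono i (by omega))]
    have hle : L c ≤ L (c + 1) := hmono c (by omega)
    obtain ⟨D, hD⟩ : ∃ D, L (c + 1) = L c + D := ⟨L (c + 1) - L c, by omega⟩
    rw [hD, Nat.add_sub_cancel_left, Finset.sum_range_add]

theorem stmt14 [Fintype A] (P : Measure (ℕ → A)) [IsProbabilityMeasure P]
    (hinv : MeasurePreserving (shift : (ℕ → A) → (ℕ → A)) P P)
    (p : Parsing A) (m M : ℕ) (hM : 1 ≤ M) (hm : M ≤ m) :
    ∀ᵐ x ∂P, ∀ N : ℕ,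
      ∑ i ∈ Finset.range (p.c N x), |Jblock P p M N x i|
        ≤ ∑ k ∈ Finset.range N, psi P m M (shift^[k] x)
          + ∑ i ∈ Finset.range (p.c N x), ∑ k ∈ Finset.range (m + 1),
              (Real.log (Zf P (k + 1) (shift^[rIdx p N x i k] x))
                + Real.log (Zf P M (shift^[rIdx p N x i k] x))) := by
  have hne : Nonempty A := by
    by_contra h
    rw [not_nonempty_iff] at h
    haveI : IsEmpty (ℕ → A) := ⟨fun x => h.false (x 0)⟩
    have h1 : P Set.univ = 1 := measure_univ
    rw [Set.univ_eq_empty_iff.mpr inferInstance] at h1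
    simp at h1
  haveI := hne
  filter_upwards [ae_good (P := P) hinv] with x hx
  intro N
  -- basic facts about the good point x
  have hpos : ∀ j n, P (cyl (shift^[j] x) n) ≠ 0 := fun j => (hx j).1
  have hbdd : ∀ j : ℕ, BddAbove (Set.range fun k : {k : ℕ // m ≤ k} =>
      |Real.log (Zf P k.1 (shift^[j] x)) - Real.log (Zf P M (shift^[j] x))|) :=
    fun j => bddAbove_abs_log hinv (hpos j) (hx j).2 m M
  have hΨ0 : ∀ j : ℕ, 0 ≤ psi P m M (shift^[j] x) := fun j => psi_nonneg' (hbdd j)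
  have hΨle : ∀ j k, m ≤ k →
      |Real.log (Zf P k (shift^[j] x)) - Real.log (Zf P M (shift^[j] x))|
        ≤ psi P m M (shift^[j] x) := fun j k hk => abs_le_psi (hbdd j) hk
  have hlog0 : ∀ j n, 0 ≤ Real.log (Zf P n (shift^[j] x)) :=
    fun j n => Real.log_nonneg (one_le_Zf P hinv (hpos j n))
  -- abbreviations
  have hL0 : p.L N x 0 = 0 := p.L_zero N x
  have hLlast : p.L N x (p.c N x) = N := p.L_last N x
  have hstrict : ∀ i < p.c N x, p.L N x i < p.L N x (i + 1) := p.L_strict N x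
  set c := p.c N x with hc
  set L := p.L N x with hLdef
  -- the per-block reflected bound
  have hblock : ∀ i < c,
      |Jblock P p M N x i|
        ≤ ∑ k ∈ Finset.range (L (i + 1) - L i), psi P m M (shift^[L i + k] x)
          + ∑ k ∈ Finset.range (m + 1),
              (Real.log (Zf P (k + 1) (shift^[rIdx p N x i k] x))
                + Real.log (Zf P M (shift^[rIdx p N x i k] x))) := by
    intro i hi
    have hlt : L i < L (i + 1) := hstrict i hi
    set a := L i with ha
    set b := L (i + 1) with hb
    set ℓ := b - a with hℓ
    have hab : a + ℓ = b := by omega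
    -- reflected term function
    set F : ℕ → ℝ := fun k' =>
      |Real.log (Zf P (k' + 1) (shift^[b - 1 - k'] x))
        - Real.log (Zf P M (shift^[b - 1 - k'] x))| with hF
    have step1 : |Jblock P p M N x i| ≤ ∑ k' ∈ Finset.range ℓ, F k' := by
      have habs : |Jblock P p M N x i|
          ≤ ∑ k ∈ Finset.range ℓ,
              |Real.log (Zf P (ℓ - k) (shift^[a + k] x))
                - Real.log (Zf P M (shift^[a + k] x))| := by
        unfold Jblock
        exact Finset.abs_sum_le_sum_abs _ _
      refine le_trans habs (le_of_eq ?_)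
      rw [← Finset.sum_range_reflect F ℓ]
      refine Finset.sum_congr rfl fun k hk => ?_
      rw [Finset.mem_range] at hk
      have e1 : (ℓ - 1 - k) + 1 = ℓ - k := by omega
      have e2 : b - 1 - (ℓ - 1 - k) = a + k := by omega
      rw [hF]
      simp only []
      rw [e1, e2]
    have step2 : ∀ k' ∈ Finset.range ℓ,
        F k' ≤ psi P m M (shift^[b - 1 - k'] x)
          + (if k' < m + 1 then
              Real.log (Zf P (k' + 1) (shift^[b - 1 - k'] x))
                + Real.log (Zf P M (shift^[b - 1 - k'] x)) else 0) := by
      intro k' _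
      by_cases hk' : k' < m + 1
      · rw [if_pos hk']
        have h1 := hlog0 (b - 1 - k') (k' + 1)
        have h2 := hlog0 (b - 1 - k') M
        have : F k' ≤ Real.log (Zf P (k' + 1) (shift^[b - 1 - k'] x))
            + Real.log (Zf P M (shift^[b - 1 - k'] x)) := by
          rw [hF]; simp only []
          rw [abs_le]; constructor <;> linarith
        linarith [hΨ0 (b - 1 - k')]
      · rw [if_neg hk']
        have hmk : m ≤ k' + 1 := by omega
        have := hΨle (b - 1 - k') (k' + 1) hmk
        rw [hF]; simp only []
        linarith
    have step3 : ∑ k' ∈ Finset.range ℓ,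
        (if k' < m + 1 then
            Real.log (Zf P (k' + 1) (shift^[b - 1 - k'] x))
              + Real.log (Zf P M (shift^[b - 1 - k'] x)) else 0)
        ≤ ∑ k' ∈ Finset.range (m + 1),
            (Real.log (Zf P (k' + 1) (shift^[b - 1 - k'] x))
              + Real.log (Zf P M (shift^[b - 1 - k'] x))) := by
      rw [← Finset.sum_filter]
      refine Finset.sum_le_sum_of_subset_of_nonneg ?_ ?_
      · intro k hk
        rw [Finset.mem_filter, Finset.mem_range] at hk
        rw [Finset.mem_range]
        exact hk.2
      · intro k _ _
        exact add_nonneg (hlog0 _ _) (hlog0 _ _)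
    have step4 : ∑ k' ∈ Finset.range ℓ, psi P m M (shift^[b - 1 - k'] x)
        = ∑ k ∈ Finset.range ℓ, psi P m M (shift^[a + k] x) := by
      rw [← Finset.sum_range_reflect (fun k' => psi P m M (shift^[b - 1 - k'] x)) ℓ]
      refine Finset.sum_congr rfl fun k hk => ?_
      rw [Finset.mem_range] at hk
      have e2 : b - 1 - (ℓ - 1 - k) = a + k := by omega
      rw [e2]
    have hrIdx : ∀ k', rIdx p N x i k' = b - 1 - k' := fun k' => rfl
    calc |Jblock P p M N x i| ≤ ∑ k' ∈ Finset.range ℓ, F k' := step1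
      _ ≤ ∑ k' ∈ Finset.range ℓ,
            (psi P m M (shift^[b - 1 - k'] x)
              + (if k' < m + 1 then
                  Real.log (Zf P (k' + 1) (shift^[b - 1 - k'] x))
                    + Real.log (Zf P M (shift^[b - 1 - k'] x)) else 0)) :=
          Finset.sum_le_sum step2
      _ = ∑ k' ∈ Finset.range ℓ, psi P m M (shift^[b - 1 - k'] x)
          + ∑ k' ∈ Finset.range ℓ,
              (if k' < m + 1 then
                  Real.log (Zf P (k' + 1) (shift^[b - 1 - k'] x))
                    + Real.log (Zf P M (shift^[b - 1 - k'] x)) else 0) :=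
          Finset.sum_add_distrib
      _ ≤ ∑ k ∈ Finset.range ℓ, psi P m M (shift^[a + k] x)
          + ∑ k' ∈ Finset.range (m + 1),
              (Real.log (Zf P (k' + 1) (shift^[b - 1 - k'] x))
                + Real.log (Zf P M (shift^[b - 1 - k'] x))) := by
          rw [step4]
          exact add_le_add le_rfl step3
      _ = ∑ k ∈ Finset.range ℓ, psi P m M (shift^[a + k] x)
          + ∑ k ∈ Finset.range (m + 1),
              (Real.log (Zf P (k + 1) (shift^[rIdx p N x i k] x))
                + Real.log (Zf P M (shift^[rIdx p N x i k] x))) := by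
          refine congrArg _ (Finset.sum_congr rfl fun k _ => ?_)
          rw [hrIdx k]
  -- sum over blocks
  calc ∑ i ∈ Finset.range c, |Jblock P p M N x i|
      ≤ ∑ i ∈ Finset.range c,
          (∑ k ∈ Finset.range (L (i + 1) - L i), psi P m M (shift^[L i + k] x)
            + ∑ k ∈ Finset.range (m + 1),
                (Real.log (Zf P (k + 1) (shift^[rIdx p N x i k] x))
                  + Real.log (Zf P M (shift^[rIdx p N x i k] x)))) := by
        refine Finset.sum_le_sum fun i hi => ?_
        exact hblock i (Finset.mem_range.mp hi)
    _ = ∑ i ∈ Finset.range c,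
          ∑ k ∈ Finset.range (L (i + 1) - L i), psi P m M (shift^[L i + k] x)
        + ∑ i ∈ Finset.range c, ∑ k ∈ Finset.range (m + 1),
            (Real.log (Zf P (k + 1) (shift^[rIdx p N x i k] x))
              + Real.log (Zf P M (shift^[rIdx p N x i k] x))) := Finset.sum_add_distrib
    _ = ∑ k ∈ Finset.range N, psi P m M (shift^[k] x)
        + ∑ i ∈ Finset.range c, ∑ k ∈ Finset.range (m + 1),
            (Real.log (Zf P (k + 1) (shift^[rIdx p N x i k] x))
              + Real.log (Zf P M (shift^[rIdx p N x i k] x))) := by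
        refine congrArg (· + _) ?_
        have := sum_blocks (fun j => psi P m M (shift^[j] x)) L c hL0
          (fun i hi => le_of_lt (hstrict i hi))
        rw [this, hLlast]
end
end
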